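/- arXiv:2502.07198 — 3 statements merged into one kernel-verified Lean document; each statement's English description precedes it below -/
import Mathlib

section
/- For every natural number k, the poset of 312-avoiding real TITOs under the Dyer order has a maximal chain with exactly k + 1 elements if and only if the poset of 312-avoiding TITOs under the Dyer order has a maximal chain with exactly k + 2 elements. -/
structure TITO (n : ℕ) where
  rel : ℤ → ℤ → Prop
  refl : ∀ a, rel a a
  antisymm : ∀ a b, rel a b → rel b a → a = b
  trans : ∀ a b c, rel a b → rel b c → rel a c
  total : ∀ a b, rel a b ∨ rel b a
  invariant : ∀ a b, rel a b ↔ rel (a + n) (b + n)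

namespace TITO

variable {n : ℕ}

/-- The inversion set of a TITO. -/
def Inversions (t : TITO n) : Set (ℤ × ℤ) := {p | p.1 < p.2 ∧ t.rel p.2 p.1}

/-- A TITO is 312-avoiding if there are no integers `a < b < c` with `c ≼ a` and `a ≼ b`. -/
def Avoids312 (t : TITO n) : Prop :=
  ¬ ∃ a b c : ℤ, a < b ∧ b < c ∧ t.rel c a ∧ t.rel a b

/-- A TITO is 132-avoiding if there are no integers `a < b < c` with `a ≼ c` and `c ≼ b`. -/
def Avoids132 (t : TITO n) : Prop :=
  ¬ ∃ a b c : ℤ, a < b ∧ b < c ∧ t.rel a c ∧ t.rel c b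

/-- A set is order-convex for a TITO. -/
def OrderConvex (t : TITO n) (S : Set ℤ) : Prop :=
  ∀ x ∈ S, ∀ z ∈ S, ∀ y : ℤ, t.rel x y → t.rel y z → y ∈ S

/-- A block of a TITO: an order-convex set with no minimal and no maximal element in which
all intervals are finite. -/
def IsBlock (t : TITO n) (I : Set ℤ) : Prop :=
  t.OrderConvex I ∧
  (∀ a ∈ I, ∃ b ∈ I, b ≠ a ∧ t.rel b a) ∧
  (∀ a ∈ I, ∃ b ∈ I, b ≠ a ∧ t.rel a b) ∧
  (∀ a ∈ I, ∀ c ∈ I, t.rel a c → {b : ℤ | t.rel a b ∧ t.rel b c}.Finite)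

/-- A block is waxing if `a ≼ a + n` for every `a` in it. -/
def Waxing (t : TITO n) (I : Set ℤ) : Prop := ∀ a ∈ I, t.rel a (a + n)

/-- A block is waning if `a + n ≼ a` for every `a` in it. -/
def Waning (t : TITO n) (I : Set ℤ) : Prop := ∀ a ∈ I, t.rel (a + n) a

/-- A TITO is real if `a ≼ a + n` whenever the residue class of `a` mod `n` is order-convex. -/
def IsReal (t : TITO n) : Prop :=
  ∀ a : ℤ, t.OrderConvex {x : ℤ | ∃ k : ℤ, x = a + k * n} → t.rel a (a + n)

/-- A TITO is co-real if `a + n ≼ a` whenever the residue class of `a` mod `n` is order-convex. -/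
def IsCoReal (t : TITO n) : Prop :=
  ∀ a : ℤ, t.OrderConvex {x : ℤ | ∃ k : ℤ, x = a + k * n} → t.rel (a + n) a

/-- `(a, b)` with `a < b` is a lower wall if `b ≼ a` is a cover relation of the total order. -/
def LowerWall (t : TITO n) (a b : ℤ) : Prop :=
  a < b ∧ t.rel b a ∧ ∀ z : ℤ, z ≠ a → z ≠ b → ¬ (t.rel b z ∧ t.rel z a)

end TITO

/-- A chain in the subposet `P` of TITOs ordered by the Dyer order. -/
def IsChainIn {n : ℕ} (P C : Set (TITO n)) : Prop :=
  C ⊆ P ∧ ∀ x ∈ C, ∀ y ∈ C, x.Inversions ⊆ y.Inversions ∨ y.Inversions ⊆ x.Inversions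

/-- A maximal chain in the subposet `P` of TITOs ordered by the Dyer order. -/
def IsMaxChainIn {n : ℕ} (P C : Set (TITO n)) : Prop :=
  IsChainIn P C ∧ ∀ C' : Set (TITO n), IsChainIn P C' → C ⊆ C' → C = C'

namespace T17

open scoped ENat

/-- The "inversion-degree" relation: `b` is inverted over `a` (for `a < b`). -/
def Dr (h : ℤ → ℕ∞) (a b : ℤ) : Prop := ((b - a).toNat : ℕ∞) ≤ h a

/-- Periodicity of the degree function. -/
def Per (n : ℕ) (h : ℤ → ℕ∞) : Prop := ∀ a, h (a + n) = h a

/-- Transitive closedness of the degree relation. -/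
def Closed (h : ℤ → ℕ∞) : Prop :=
  ∀ a b c : ℤ, a < b → b < c → Dr h a b → Dr h b c → Dr h a c

def Good (n : ℕ) (h : ℤ → ℕ∞) : Prop := Per n h ∧ Closed h

lemma Dr_mono {h : ℤ → ℕ∞} {a b c : ℤ} (hbc : b ≤ c) (hd : Dr h a c) : Dr h a b := by
  refine le_trans ?_ hd
  exact Nat.cast_le.2 (by omega)

lemma perdvd {n : ℕ} {h : ℤ → ℕ∞} (hper : Per n h) {a b : ℤ} (hd : (n:ℤ) ∣ (b - a)) :
    h a = h b := by
  obtain ⟨k, hk⟩ := hd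
  have hb : b = a + n * k := by omega
  subst hb
  induction k using Int.induction_on with
  | zero => simp
  | succ i ih => rw [show a + (n:ℤ) * (i+1) = (a + n*i) + n by ring, hper]; exact ih (by ring)
  | pred i ih =>
      rw [show a + (n:ℤ) * (-i-1) = (a + n*(-i)) - n by ring]
      rw [show h (a + n*(-i) - n) = h (a + n*(-i)) from ?_]
      · exact ih (by ring)
      · have := hper (a + n*(-i) - n)
        rw [show a + (n:ℤ)*(-i) - n + n = a + n*(-i) by ring] at this
        exact this.symm

/-- Build a TITO from a good degree function. -/
def mk (n : ℕ) (h : ℤ → ℕ∞) (hg : Good n h) : TITO n where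
  rel a b := a = b ∨ (a < b ∧ ¬ Dr h a b) ∨ (b < a ∧ Dr h b a)
  refl a := Or.inl rfl
  antisymm a b hab hba := by
    rcases hab with rfl | ⟨h1, h2⟩ | ⟨h1, h2⟩
    · rfl
    · rcases hba with he | ⟨h3, h4⟩ | ⟨h3, h4⟩
      · omega
      · omega
      · exact absurd h4 h2
    · rcases hba with he | ⟨h3, h4⟩ | ⟨h3, h4⟩
      · omega
      · exact absurd h2 h4
      · omega
  trans a b c hab hbc := by
    rcases hab with rfl | ⟨h1, h2⟩ | ⟨h1, h2⟩
    · exact hbc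
    · -- a < b, ¬ Dr a b
      rcases hbc with rfl | ⟨h3, h4⟩ | ⟨h3, h4⟩
      · exact Or.inr (Or.inl ⟨h1, h2⟩)
      · -- b < c : a < c, show ¬ Dr a c
        refine Or.inr (Or.inl ⟨by omega, fun hd => h2 (Dr_mono (by omega) hd)⟩)
      · -- c < b, Dr c b
        rcases lt_trichotomy a c with h5 | rfl | h5
        · refine Or.inr (Or.inl ⟨h5, fun hd => h2 (hg.2 a c b h5 h3 hd h4)⟩)
        · exact Or.inl rfl
        · exact Or.inr (Or.inr ⟨h5, Dr_mono (by omega) h4⟩)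
    · -- b < a, Dr b a
      rcases hbc with rfl | ⟨h3, h4⟩ | ⟨h3, h4⟩
      · exact Or.inr (Or.inr ⟨h1, h2⟩)
      · -- b < c, ¬ Dr b c
        rcases lt_trichotomy a c with h5 | rfl | h5
        · refine Or.inr (Or.inl ⟨h5, fun hd => h4 (hg.2 b a c h1 h5 h2 hd)⟩)
        · exact Or.inl rfl
        · exact absurd (Dr_mono (by omega) h2) h4
      · -- c < b < a
        exact Or.inr (Or.inr ⟨by omega, hg.2 c b a h3 h1 h4 h2⟩)
  total a b := by
    rcases lt_trichotomy a b with h1 | rfl | h1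
    · by_cases hd : Dr h a b
      · exact Or.inr (Or.inr (Or.inr ⟨h1, hd⟩))
      · exact Or.inl (Or.inr (Or.inl ⟨h1, hd⟩))
    · exact Or.inl (Or.inl rfl)
    · by_cases hd : Dr h b a
      · exact Or.inl (Or.inr (Or.inr ⟨h1, hd⟩))
      · exact Or.inr (Or.inr (Or.inl ⟨h1, hd⟩))
  invariant a b := by
    have e1 : ∀ x y : ℤ, Dr h (x + n) (y + n) ↔ Dr h x y := by
      intro x y
      unfold Dr
      rw [show y + n - (x + n) = y - x by ring, hg.1 x]
    constructor
    · rintro (rfl | ⟨h1, h2⟩ | ⟨h1, h2⟩)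
      · exact Or.inl rfl
      · exact Or.inr (Or.inl ⟨by omega, fun hd => h2 ((e1 a b).1 hd)⟩)
      · exact Or.inr (Or.inr ⟨by omega, (e1 b a).2 h2⟩)
    · rintro (he | ⟨h1, h2⟩ | ⟨h1, h2⟩)
      · exact Or.inl (by omega)
      · exact Or.inr (Or.inl ⟨by omega, fun hd => h2 ((e1 a b).2 hd)⟩)
      · exact Or.inr (Or.inr ⟨by omega, (e1 b a).1 h2⟩)

lemma rel_mk_iff {n : ℕ} {h : ℤ → ℕ∞} {hg : Good n h} {a b : ℤ} (hab : a < b) :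
    (mk n h hg).rel b a ↔ Dr h a b := by
  show _ ∨ _ ∨ _ ↔ _
  constructor
  · rintro (rfl | ⟨h1, h2⟩ | ⟨h1, h2⟩)
    · omega
    · omega
    · exact h2
  · intro hd
    exact Or.inr (Or.inr ⟨hab, hd⟩)

lemma inv_mk {n : ℕ} {h : ℤ → ℕ∞} (hg : Good n h) :
    (mk n h hg).Inversions = {p : ℤ × ℤ | p.1 < p.2 ∧ Dr h p.1 p.2} := by
  ext ⟨a, b⟩
  simp only [TITO.Inversions, Set.mem_setOf_eq]
  constructor
  · rintro ⟨h1, h2⟩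
    exact ⟨h1, (rel_mk_iff h1).1 h2⟩
  · rintro ⟨h1, h2⟩
    exact ⟨h1, (rel_mk_iff h1).2 h2⟩

lemma avoids_mk {n : ℕ} {h : ℤ → ℕ∞} (hg : Good n h) : (mk n h hg).Avoids312 := by
  rintro ⟨a, b, c, hab, hbc, hca, hab2⟩
  have h1 : Dr h a c := (rel_mk_iff (by omega)).1 hca
  have h2 : Dr h a b := Dr_mono (by omega) h1
  rcases hab2 with he | ⟨h3, h4⟩ | ⟨h3, h4⟩
  · omega
  · exact h4 h2
  · omega

end T17
namespace T17

/-- Degree function extracted from a TITO. -/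
noncomputable def hf {n : ℕ} (t : TITO n) (a : ℤ) : ℕ∞ :=
  ⨆ b ∈ {b : ℤ | a < b ∧ t.rel b a}, ((b - a).toNat : ℕ∞)

lemma le_hf {n : ℕ} {t : TITO n} {a b : ℤ} (h1 : a < b) (h2 : t.rel b a) :
    ((b - a).toNat : ℕ∞) ≤ hf t a :=
  le_biSup (fun b => ((b - a).toNat : ℕ∞)) (show b ∈ {b : ℤ | a < b ∧ t.rel b a} from ⟨h1, h2⟩)

lemma hf_le {n : ℕ} {t : TITO n} {a : ℤ} {m : ℕ∞}
    (hm : ∀ b, a < b → t.rel b a → ((b - a).toNat : ℕ∞) ≤ m) : hf t a ≤ m :=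
  iSup₂_le fun b hb => hm b hb.1 hb.2

lemma down_closed {n : ℕ} {t : TITO n} (ha : t.Avoids312) {a b c : ℤ}
    (h1 : a < b) (h2 : b < c) (h3 : t.rel c a) : t.rel b a := by
  rcases t.total b a with h | h
  · exact h
  · exact absurd ⟨a, b, c, h1, h2, h3, h⟩ ha

lemma rel_hf_iff {n : ℕ} {t : TITO n} (ha : t.Avoids312) {a b : ℤ} (hab : a < b) :
    t.rel b a ↔ Dr (hf t) a b := by
  constructor
  · exact fun h => le_hf hab h
  · intro hd
    by_contra hr
    have hb : hf t a ≤ (((b - 1 - a).toNat : ℕ) : ℕ∞) := by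
      refine hf_le fun c hc hrc => Nat.cast_le.2 ?_
      have hcb : c < b := by
        rcases lt_trichotomy c b with h | rfl | h
        · exact h
        · exact absurd hrc hr
        · exact absurd (down_closed ha hab h hrc) hr
      omega
    have := le_trans hd hb
    rw [Nat.cast_le] at this
    omega

lemma rel_hf_iff' {n : ℕ} {t : TITO n} (ha : t.Avoids312) {a b : ℤ} (hab : a < b) :
    t.rel a b ↔ ¬ Dr (hf t) a b := by
  rw [← rel_hf_iff ha hab]
  constructor
  · intro h1 h2
    exact absurd (t.antisymm _ _ h1 h2) (by omega)
  · intro h1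
    rcases t.total a b with h | h
    · exact h
    · exact absurd h h1

lemma good_hf {n : ℕ} {t : TITO n} (ha : t.Avoids312) : Good n (hf t) := by
  constructor
  · intro a
    apply le_antisymm
    · refine hf_le fun b hb hrb => ?_
      have h1 : a < b - n := by omega
      have h2 : t.rel (b - n) a := by
        have := (t.invariant (b - n) a).2
        rw [show b - (n:ℤ) + n = b by ring] at this
        exact this hrb
      have := le_hf h1 h2
      rwa [show b - (n:ℤ) - a = b - (a + n) by ring] at this
    · refine hf_le fun b hb hrb => ?_
      have h1 : a + n < b + n := by omega
      have h2 : t.rel (b + n) (a + n) := (t.invariant b a).1 hrb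
      have := le_hf h1 h2
      rwa [show b + (n:ℤ) - (a + n) = b - a by ring] at this
  · intro a b c h1 h2 hd1 hd2
    have r1 : t.rel b a := (rel_hf_iff ha h1).2 hd1
    have r2 : t.rel c b := (rel_hf_iff ha h2).2 hd2
    exact (rel_hf_iff ha (by omega)).1 (t.trans _ _ _ r2 r1)

lemma inv_char {n : ℕ} {t : TITO n} (ha : t.Avoids312) :
    t.Inversions = {p : ℤ × ℤ | p.1 < p.2 ∧ Dr (hf t) p.1 p.2} := by
  ext ⟨a, b⟩
  simp only [TITO.Inversions, Set.mem_setOf_eq]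
  exact ⟨fun ⟨h1, h2⟩ => ⟨h1, (rel_hf_iff ha h1).1 h2⟩,
         fun ⟨h1, h2⟩ => ⟨h1, (rel_hf_iff ha h1).2 h2⟩⟩

lemma tito_ext {n : ℕ} {t t' : TITO n} (h : t.Inversions = t'.Inversions) : t = t' := by
  have key : ∀ a b : ℤ, t.rel a b ↔ t'.rel a b := by
    have inv1 : ∀ (s : TITO n) (a b : ℤ), a < b → (s.rel b a ↔ (a, b) ∈ s.Inversions) := by
      intro s a b hab
      exact ⟨fun hr => ⟨hab, hr⟩, fun hr => hr.2⟩
    have inv2 : ∀ (s : TITO n) (a b : ℤ), a < b → (s.rel a b ↔ (a, b) ∉ s.Inversions) := by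
      intro s a b hab
      constructor
      · intro h1 h2
        exact absurd (s.antisymm _ _ h1 h2.2) (by omega)
      · intro h1
        rcases s.total a b with hh | hh
        · exact hh
        · exact absurd ((inv1 s a b hab).1 hh) h1
    intro a b
    rcases lt_trichotomy a b with hab | rfl | hab
    · rw [inv2 t a b hab, inv2 t' a b hab, h]
    · simp [t.refl, t'.refl]
    · rw [inv1 t b a hab, inv1 t' b a hab, h]
  cases t with
  | mk rel refl antisymm trans total invariant =>
    cases t' with
    | mk rel' refl' antisymm' trans' total' invariant' =>
      congr 1
      funext a b
      exact propext (key a b)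

lemma inv_subset_iff {n : ℕ} {t t' : TITO n} (ht : t.Avoids312) (ht' : t'.Avoids312) :
    t.Inversions ⊆ t'.Inversions ↔ ∀ a, hf t a ≤ hf t' a := by
  constructor
  · intro hs a
    refine hf_le fun b hb hrb => ?_
    have : (a, b) ∈ t'.Inversions := hs ⟨hb, hrb⟩
    exact le_hf hb this.2
  · intro hs p hp
    rw [inv_char ht] at hp
    rw [inv_char ht']
    exact ⟨hp.1, le_trans hp.2 (hs p.1)⟩

lemma hf_mk {n : ℕ} {h : ℤ → ℕ∞} (hg : Good n h) : hf (mk n h hg) = h := by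
  funext a
  apply le_antisymm
  · refine hf_le fun b hb hrb => ?_
    exact (rel_mk_iff hb).1 hrb
  · cases hh : h a with
    | top =>
      have : ∀ m : ℕ, (m : ℕ∞) ≤ hf (mk n h hg) a := by
        intro m
        have h1 : a < a + m + 1 := by omega
        have h2 : (mk n h hg).rel (a + m + 1) a := by
          refine (rel_mk_iff h1).2 ?_
          rw [Dr, hh]
          exact le_top
        have := le_hf h1 h2
        refine le_trans (Nat.cast_le.2 (show m ≤ (a + m + 1 - a).toNat by omega)) this
      by_contra hc
      cases hx : hf (mk n h hg) a with
      | top => exact hc (by rw [hx])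
      | coe k =>
        have := this (k + 1)
        rw [hx, Nat.cast_le] at this
        omega
    | coe k =>
      rcases Nat.eq_zero_or_pos k with rfl | hk
      · simp
      · have h1 : a < a + k := by omega
        have h2 : (mk n h hg).rel (a + k) a := by
          refine (rel_mk_iff h1).2 ?_
          rw [Dr, hh]
          exact Nat.cast_le.2 (by omega)
        have := le_hf h1 h2
        rw [show a + (k:ℤ) - a = (k:ℤ) by ring] at this
        simpa using this

end T17
namespace T17

lemma enat_eq_top {x : ℕ∞} (h : ∀ m : ℕ, (m : ℕ∞) ≤ x) : x = ⊤ := by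
  cases x with
  | top => rfl
  | coe k => exact absurd (Nat.cast_le.mp (h (k + 1))) (by omega)

lemma reach_top {h : ℤ → ℕ∞} (hcl : Closed h) {a b : ℤ} (hab : a < b) (hd : Dr h a b)
    (ht : h b = ⊤) : h a = ⊤ := by
  refine enat_eq_top fun m => ?_
  have h1 : Dr h b (b + m + 1) := by rw [Dr, ht]; exact le_top
  have h2 : Dr h a (b + m + 1) := hcl a b (b + m + 1) hab (by omega) hd h1
  exact le_trans (Nat.cast_le.2 (by omega)) h2

lemma top_of_n_le {n : ℕ} {h : ℤ → ℕ∞} (hg : Good n h) (hn : 1 ≤ n) {a : ℤ}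
    (hd : (n : ℕ∞) ≤ h a) : h a = ⊤ := by
  have key : ∀ k : ℕ, Dr h a (a + n + k * n) := by
    intro k
    induction k with
    | zero =>
      show ((a + (n:ℤ) + (0:ℕ) * (n:ℤ) - a).toNat : ℕ∞) ≤ h a
      have e : a + (n:ℤ) + (0:ℕ) * (n:ℤ) - a = ((n:ℕ) : ℤ) := by push_cast; ring
      rw [e, Int.toNat_natCast]
      exact hd
    | succ k ih =>
      have hper : h (a + n + k * n) = h a := (perdvd hg.1 ⟨(k:ℤ)+1, by push_cast; ring⟩).symm
      have h1 : Dr h (a + n + k * n) (a + n + (k+1 : ℕ) * n) := by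
        show ((a + (n:ℤ) + ((k+1 : ℕ):ℤ) * n - (a + n + k * n)).toNat : ℕ∞) ≤ _
        have e : a + (n:ℤ) + ((k+1 : ℕ):ℤ) * n - (a + n + k * n) = ((n:ℕ) : ℤ) := by
          push_cast; ring
        rw [e, Int.toNat_natCast, hper]
        exact hd
      have hk0 : (0:ℤ) ≤ (k:ℤ) * n := by positivity
      have hN : (1:ℤ) ≤ (n:ℤ) := by exact_mod_cast hn
      have e2 : a + (n:ℤ) + ((k+1 : ℕ):ℤ) * n = (a + n + k * n) + n := by push_cast; ring
      refine hg.2 a (a + n + k*n) (a + n + (k+1 : ℕ)*n) (by linarith) (by rw [e2]; linarith) ih h1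
  refine enat_eq_top fun m => ?_
  refine le_trans ?_ (key m)
  have e3 : a + (n:ℤ) + (m:ℤ) * n - a = ((n * (1 + m) : ℕ) : ℤ) := by push_cast; ring
  rw [e3, Int.toNat_natCast]
  have h4 : 1 * (1 + m) ≤ n * (1 + m) := Nat.mul_le_mul_right _ hn
  exact Nat.cast_le.2 (by omega)

lemma fin_le {n : ℕ} {h : ℤ → ℕ∞} (hg : Good n h) (hn : 1 ≤ n) {a : ℤ}
    (hne : h a ≠ ⊤) : h a ≤ ((n - 1 : ℕ) : ℕ∞) := by
  cases hx : h a with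
  | top => exact absurd hx hne
  | coe k =>
    refine Nat.cast_le.2 ?_
    by_contra hc
    have : (n : ℕ∞) ≤ h a := by rw [hx]; exact Nat.cast_le.2 (by omega)
    exact hne (top_of_n_le hg hn this)

/-- Residues mod n. -/
def Eqv (n : ℕ) (r a : ℤ) : Prop := (n : ℤ) ∣ (a - r)

lemma eqv_refl {n : ℕ} (r : ℤ) : Eqv n r r := by simp [Eqv]

lemma eqv_symm {n : ℕ} {r a : ℤ} (h : Eqv n r a) : Eqv n a r := by
  obtain ⟨k, hk⟩ := h; exact ⟨-k, by rw [mul_neg]; omega⟩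

lemma eqv_tr {n : ℕ} {r a b : ℤ} (h1 : Eqv n r a) (h2 : Eqv n a b) : Eqv n r b := by
  obtain ⟨k, hk⟩ := h1; obtain ⟨l, hl⟩ := h2; exact ⟨k + l, by rw [mul_add]; omega⟩

lemma eqv_shift {n : ℕ} (r a : ℤ) : Eqv n r (a + n) ↔ Eqv n r a := by
  constructor
  · rintro ⟨k, hk⟩; exact ⟨k - 1, by rw [mul_sub, mul_one]; omega⟩
  · rintro ⟨k, hk⟩; exact ⟨k + 1, by rw [mul_add, mul_one]; omega⟩

lemma hclass {n : ℕ} {h : ℤ → ℕ∞} (hper : Per n h) {a b : ℤ} (he : Eqv n a b) :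
    h a = h b := perdvd hper he

/-- A representative of the class of `b` strictly between `a` and `a + n`. -/
lemma rep_exists {n : ℕ} (hn : 1 ≤ n) {a b : ℤ} (hb : ¬ Eqv n a b) :
    ∃ x, Eqv n b x ∧ a < x ∧ x < a + n := by
  refine ⟨a + (b - a) % n, ?_, ?_, ?_⟩
  · have hq := Int.mul_ediv_add_emod (b - a) (n : ℤ)
    have hq := Int.mul_ediv_add_emod (b - a) (n : ℤ)
    refine ⟨-((b - a) / n), by rw [mul_neg]; omega⟩
  · have h1 : 0 ≤ (b - a) % n := Int.emod_nonneg _ (by positivity)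
    have h2 : (b - a) % n ≠ 0 := by
      intro hc
      exact hb (Int.dvd_of_emod_eq_zero hc)
    omega
  · have := Int.emod_lt_of_pos (b - a) (show (0:ℤ) < n by positivity)
    omega

/-- If `h` takes value `n-1` on a point `a`, then no other class can have value `⊤`. -/
lemma allfin_of_vfin {n : ℕ} {h : ℤ → ℕ∞} (hg : Good n h) (hn : 2 ≤ n) {a : ℤ}
    (ha : h a = ((n - 1 : ℕ) : ℕ∞)) {b : ℤ} (hb : ¬ Eqv n a b) : h b ≠ ⊤ := by
  intro htop
  obtain ⟨x, hx1, hx2, hx3⟩ := rep_exists (by omega) hb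
  have hhx : h x = ⊤ := by rw [← hclass hg.1 hx1, htop]
  have hd : Dr h a x := by
    rw [Dr, ha]
    exact Nat.cast_le.2 (by omega)
  have := reach_top hg.2 hx2 hd hhx
  rw [ha] at this
  exact absurd this (by simp)

/-- If `h` is `n-1` on the whole class of `r`, finite points off the class can't reach it. -/
lemma noreach_of_vfin {n : ℕ} {h : ℤ → ℕ∞} (hg : Good n h) (hn : 2 ≤ n) {r : ℤ}
    (hr : ∀ x, Eqv n r x → h x = ((n - 1 : ℕ) : ℕ∞)) {b : ℤ} (hb : h b ≠ ⊤)
    {x : ℤ} (hx : Eqv n r x) (hbx : b < x) : ¬ Dr h b x := by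
  intro hd
  have hhx : h x = ((n - 1 : ℕ) : ℕ∞) := hr x hx
  have h1 : Dr h x (x + (n - 1 : ℕ)) := by
    rw [Dr, hhx]
    exact Nat.cast_le.2 (by omega)
  have h2 : Dr h b (x + (n - 1 : ℕ)) := hg.2 b x _ hbx (by omega) hd h1
  have h3 := le_trans h2 (fin_le hg (by omega) hb)
  rw [Nat.cast_le] at h3
  omega

open Classical in
/-- Update `h` on the whole class of `r`. -/
noncomputable def upd (n : ℕ) (h : ℤ → ℕ∞) (r : ℤ) (v : ℕ∞) : ℤ → ℕ∞ :=
  fun a => if Eqv n r a then v else h a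

lemma upd_eqv {n : ℕ} {h : ℤ → ℕ∞} {r : ℤ} {v : ℕ∞} {a : ℤ} (ha : Eqv n r a) :
    upd n h r v a = v := by simp [upd, ha]

lemma upd_not {n : ℕ} {h : ℤ → ℕ∞} {r : ℤ} {v : ℕ∞} {a : ℤ} (ha : ¬ Eqv n r a) :
    upd n h r v a = h a := by simp [upd, ha]

lemma upd_per {n : ℕ} {h : ℤ → ℕ∞} {r : ℤ} {v : ℕ∞} (hper : Per n h) :
    Per n (upd n h r v) := by
  intro a
  by_cases he : Eqv n r a
  · rw [upd_eqv he, upd_eqv ((eqv_shift r a).2 he)]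
  · rw [upd_not he, upd_not (fun hc => he ((eqv_shift r a).1 hc)), hper]

/-- Construction A : set the class of `r` to `⊤`. -/
lemma conA {n : ℕ} {h : ℤ → ℕ∞} {r : ℤ} (hg : Good n h)
    (Hno : ∀ b, h b ≠ ⊤ → ¬ Eqv n r b → ∀ x, Eqv n r x → b < x → ¬ Dr h b x) :
    Good n (upd n h r ⊤) := by
  refine ⟨upd_per hg.1, ?_⟩
  intro a b c hab hbc hd1 hd2
  by_cases hea : Eqv n r a
  · rw [Dr, upd_eqv hea]; exact le_top
  · rw [Dr, upd_not hea] at hd1 ⊢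
    by_cases hta : h a = ⊤
    · rw [hta]; exact le_top
    · by_cases heb : Eqv n r b
      · exact absurd hd1 (Hno a hta hea b heb hab)
      · rw [Dr, upd_not heb] at hd2
        by_cases htb : h b = ⊤
        · exact absurd (reach_top hg.2 hab hd1 htb) hta
        · exact hg.2 a b c hab hbc hd1 hd2

/-- Construction B : lower a `⊤` class of `r` to `n - 1`, all other classes finite. -/
lemma conB {n : ℕ} {h : ℤ → ℕ∞} {r : ℤ} (hg : Good n h) (hn : 2 ≤ n)
    (htop : ∀ x, Eqv n r x → h x = ⊤) (hfin : ∀ b, ¬ Eqv n r b → h b ≠ ⊤) :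
    Good n (upd n h r ((n - 1 : ℕ) : ℕ∞)) := by
  refine ⟨upd_per hg.1, ?_⟩
  intro a b c hab hbc hd1 hd2
  by_cases hea : Eqv n r a
  · rw [Dr, upd_eqv hea] at hd1 ⊢
    rw [Nat.cast_le] at hd1
    by_cases heb : Eqv n r b
    · exfalso
      have hdvd : (n:ℤ) ∣ (b - a) := eqv_tr (eqv_symm hea) heb
      have h1 := Int.le_of_dvd (by omega) hdvd
      omega
    · rw [Dr, upd_not heb] at hd2
      have hbfin : h b ≠ ⊤ := hfin b heb
      have hno : ¬ Dr h b (a + n) := by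
        intro hdx
        have : h (a + n) = ⊤ := htop _ ((eqv_shift r a).2 hea)
        exact hbfin (reach_top hg.2 (by omega) hdx this)
      rw [Dr, not_le] at hno
      have hlt : ((c - b).toNat : ℕ∞) < ((a + n - b).toNat : ℕ∞) :=
        lt_of_le_of_lt hd2 hno
      rw [Nat.cast_lt] at hlt
      exact Nat.cast_le.2 (by omega)
  · rw [Dr, upd_not hea] at hd1 ⊢
    by_cases heb : Eqv n r b
    · exact absurd (reach_top hg.2 hab hd1 (htop b heb)) (hfin a hea)
    · rw [Dr, upd_not heb] at hd2
      exact hg.2 a b c hab hbc hd1 hd2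

end T17
namespace T17

lemma good_bot (n : ℕ) : Good n (fun _ => (0 : ℕ∞)) := by
  constructor
  · intro a; rfl
  · intro a b c hab hbc hd1 _
    exfalso
    have h0 : ((b - a).toNat : ℕ∞) = 0 := le_antisymm hd1 zero_le
    rw [Nat.cast_eq_zero] at h0
    omega

lemma good_top (n : ℕ) : Good n (fun _ => (⊤ : ℕ∞)) := by
  exact ⟨fun a => rfl, fun a b c _ _ _ _ => le_top⟩

noncomputable def tbot (n : ℕ) : TITO n := mk n (fun _ => 0) (good_bot n)
noncomputable def ttop (n : ℕ) : TITO n := mk n (fun _ => ⊤) (good_top n)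

lemma tbot_le {n : ℕ} (t : TITO n) : (tbot n).Inversions ⊆ t.Inversions := by
  intro p hp
  rw [tbot, inv_mk] at hp
  exfalso
  have h0 : ((p.2 - p.1).toNat : ℕ∞) = 0 := le_antisymm hp.2 zero_le
  rw [Nat.cast_eq_zero] at h0
  have := hp.1
  omega

lemma le_ttop {n : ℕ} (t : TITO n) : t.Inversions ⊆ (ttop n).Inversions := by
  intro p hp
  rw [ttop, inv_mk]
  exact ⟨hp.1, le_top⟩

lemma hf_tbot {n : ℕ} : hf (tbot n) = fun _ => 0 := hf_mk _
lemma hf_ttop {n : ℕ} : hf (ttop n) = fun _ => ⊤ := hf_mk _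

lemma mem_class_iff {n : ℕ} {a x : ℤ} : (∃ k : ℤ, x = a + k * n) ↔ Eqv n a x := by
  constructor
  · rintro ⟨k, rfl⟩; exact ⟨k, by ring⟩
  · rintro ⟨k, hk⟩
    refine ⟨k, ?_⟩
    have e : (k : ℤ) * n = n * k := by ring
    rw [e]
    omega

lemma real_of_allfin {n : ℕ} {t : TITO n} (ht : t.Avoids312) (hn : 1 ≤ n)
    (hfin : ∀ a, hf t a ≠ ⊤) : t.IsReal := by
  intro a _
  rw [rel_hf_iff' ht (show a < a + n by omega)]
  intro hd
  refine hfin a (top_of_n_le (good_hf ht) hn ?_)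
  refine le_trans ?_ hd
  exact Nat.cast_le.2 (by omega)

lemma real_of_multi {n : ℕ} {t : TITO n} (ht : t.Avoids312) (hn : 1 ≤ n)
    {r s : ℤ} (hrs : ¬ Eqv n r s) (hr : hf t r = ⊤) (hs : hf t s = ⊤) : t.IsReal := by
  intro a hconv
  by_cases hfa : hf t a = ⊤
  · exfalso
    -- pick a ⊤ point not equivalent to a
    obtain ⟨y, hy1, hy2⟩ : ∃ y, ¬ Eqv n a y ∧ hf t y = ⊤ := by
      by_cases h1 : Eqv n a r
      · refine ⟨s, fun hc => hrs (eqv_tr (eqv_symm h1) hc), hs⟩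
      · exact ⟨r, h1, hr⟩
    -- x : element of class of a above y
    obtain ⟨x, hx1, hx2, _⟩ := rep_exists hn (fun hc => hy1 (eqv_symm hc))
    -- z' : element of class of a below y
    obtain ⟨z', hz1, hz2, hz3⟩ := rep_exists (a := y - (n:ℤ)) hn
      (fun hc : Eqv n (y - (n:ℤ)) a => by
        have h2 := eqv_symm hc
        have h3 := (eqv_shift a (y - (n:ℤ))).2 h2
        rw [show y - (n:ℤ) + n = y by ring] at h3
        exact hy1 h3)
    have hz4 : z' < y := by omega
    have hrel1 : t.rel x y := by
      rw [rel_hf_iff ht hx2, Dr, hy2]; exact le_top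
    have hrel2 : t.rel y z' := by
      have hzt : hf t z' = ⊤ := (hclass (good_hf ht).1 hz1).symm.trans hfa
      rw [rel_hf_iff ht hz4, Dr, hzt]; exact le_top
    have := hconv x (mem_class_iff.2 hx1) z' (mem_class_iff.2 hz1) y hrel1 hrel2
    exact hy1 (mem_class_iff.1 this)
  · rw [rel_hf_iff' ht (show a < a + n by omega)]
    intro hd
    refine hfa (top_of_n_le (good_hf ht) hn ?_)
    refine le_trans ?_ hd
    exact Nat.cast_le.2 (by omega)

lemma not_real_of_single {n : ℕ} {t : TITO n} (ht : t.Avoids312) (hn : 1 ≤ n)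
    {r : ℤ} (hr : ∀ x, Eqv n r x → hf t x = ⊤) (ho : ∀ b, ¬ Eqv n r b → hf t b ≠ ⊤) :
    ¬ t.IsReal := by
  intro hreal
  have hconv : t.OrderConvex {x : ℤ | ∃ k : ℤ, x = r + k * n} := by
    intro x hx z hz y h1 h2
    simp only [Set.mem_setOf_eq, mem_class_iff] at hx hz ⊢
    by_contra hy
    have hyfin : hf t y ≠ ⊤ := ho y hy
    rcases lt_trichotomy x y with hxy | rfl | hxy
    · rw [rel_hf_iff' ht hxy] at h1
      refine h1 ?_
      rw [Dr, hr x hx]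
      exact le_top
    · exact hy hx
    · rw [rel_hf_iff ht hxy] at h1
      exact hyfin (reach_top (good_hf ht).2 hxy h1 (hr x hx))
  have := hreal r hconv
  have h2 : t.rel (r + n) r := by
    rw [rel_hf_iff ht (show r < r + n by omega), Dr, hr r (eqv_refl r)]
    exact le_top
  have := t.antisymm _ _ this h2
  omega

lemma not_real_iff {n : ℕ} {t : TITO n} (ht : t.Avoids312) (hn : 1 ≤ n) :
    ¬ t.IsReal ↔ ∃ r, (∀ x, Eqv n r x → hf t x = ⊤) ∧ (∀ b, ¬ Eqv n r b → hf t b ≠ ⊤) := by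
  constructor
  · intro hnr
    by_cases hfin : ∀ a, hf t a ≠ ⊤
    · exact absurd (real_of_allfin ht hn hfin) hnr
    · push_neg at hfin
      obtain ⟨a, ha⟩ := hfin
      by_cases hsingle : ∀ b, ¬ Eqv n a b → hf t b ≠ ⊤
      · refine ⟨a, fun x hx => ?_, hsingle⟩
        rw [← hclass (good_hf ht).1 hx, ha]
      · push_neg at hsingle
        obtain ⟨b, hb1, hb2⟩ := hsingle
        exact absurd (real_of_multi ht hn hb1 ha hb2) hnr
  · rintro ⟨r, hr, ho⟩
    exact not_real_of_single ht hn hr ho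

end T17
namespace T17

/-- Comparability in the Dyer order. -/
def Cmp {n : ℕ} (x y : TITO n) : Prop :=
  x.Inversions ⊆ y.Inversions ∨ y.Inversions ⊆ x.Inversions

lemma maxchain_iff {n : ℕ} (Q C : Set (TITO n)) :
    IsMaxChainIn Q C ↔ IsChainIn Q C ∧ ∀ z ∈ Q, (∀ x ∈ C, Cmp z x) → z ∈ C := by
  constructor
  · rintro ⟨hc, hm⟩
    refine ⟨hc, fun z hz hcmp => ?_⟩
    have hch : IsChainIn Q (C ∪ {z}) := by
      constructor
      · rintro x (hx | rfl)
        · exact hc.1 hx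
        · exact hz
      · rintro x (hx | rfl) y (hy | rfl)
        · exact hc.2 x hx y hy
        · rcases hcmp x hx with h | h
          · exact Or.inr h
          · exact Or.inl h
        · exact hcmp y hy
        · exact Or.inl (subset_refl _)
    have := hm (C ∪ {z}) hch Set.subset_union_left
    rw [this]
    exact Or.inr rfl
  · rintro ⟨hc, hcrit⟩
    refine ⟨hc, fun C' hC' hsub => ?_⟩
    refine Set.Subset.antisymm hsub fun z hz => ?_
    exact hcrit z (hC'.1 hz) fun x hx => hC'.2 z hz x (hsub hx)

lemma chain_max {n : ℕ} {C : Set (TITO n)} (hfin : C.Finite) (hne : C.Nonempty)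
    (hcmp : ∀ x ∈ C, ∀ y ∈ C, Cmp x y) :
    ∃ u ∈ C, ∀ x ∈ C, x.Inversions ⊆ u.Inversions := by
  obtain ⟨u, hu, hmax⟩ := Set.Finite.exists_maximalFor TITO.Inversions C hfin hne
  refine ⟨u, hu, fun x hx => ?_⟩
  rcases hcmp x hx u hu with h | h
  · exact h
  · exact hmax hx h

lemma chain_min {n : ℕ} {C : Set (TITO n)} (hfin : C.Finite) (hne : C.Nonempty)
    (hcmp : ∀ x ∈ C, ∀ y ∈ C, Cmp x y) :
    ∃ v ∈ C, ∀ x ∈ C, v.Inversions ⊆ x.Inversions := by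
  obtain ⟨v, hv, hmin⟩ := Set.Finite.exists_minimalFor TITO.Inversions C hfin hne
  refine ⟨v, hv, fun x hx => ?_⟩
  rcases hcmp x hx v hv with h | h
  · exact hmin hx h
  · exact h

/-- Single-⊤ predicate. -/
def SingT (n : ℕ) (h : ℤ → ℕ∞) (r : ℤ) : Prop :=
  (∀ x, Eqv n r x → h x = ⊤) ∧ (∀ b, ¬ Eqv n r b → h b ≠ ⊤)

lemma singT_eqv {n : ℕ} {h : ℤ → ℕ∞} {r r' : ℤ} (hs : SingT n h r) (he : Eqv n r r') :
    SingT n h r' := by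
  constructor
  · exact fun x hx => hs.1 x (eqv_tr he hx)
  · exact fun b hb => hs.2 b (fun hc => hb (eqv_tr (eqv_symm he) hc))

lemma not_real_iff' {n : ℕ} {t : TITO n} (ht : t.Avoids312) (hn : 1 ≤ n) :
    ¬ t.IsReal ↔ ∃ r, SingT n (hf t) r := not_real_iff ht hn

/-- The select-class lemma: choose a class of g-value ⊤, h-finite, unreachable by finite h. -/
lemma selectR {n : ℕ} (hn : 2 ≤ n) {h g : ℤ → ℕ∞} (hgh : Good n h) (hgg : Good n g)
    (hle : ∀ a, h a ≤ g a) (hex : ∃ a, g a = ⊤ ∧ h a ≠ ⊤) :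
    ∃ r, g r = ⊤ ∧ h r ≠ ⊤ ∧
      ∀ b, h b ≠ ⊤ → ¬ Eqv n r b → ∀ x, Eqv n r x → b < x → ¬ Dr h b x := by
  classical
  set T : Finset ℕ := (Finset.range n).filter (fun i => g (i : ℤ) = ⊤ ∧ h (i : ℤ) ≠ ⊤) with hT
  have hTne : T.Nonempty := by
    obtain ⟨a, hga, hha⟩ := hex
    refine ⟨(a % n).toNat, ?_⟩
    have h0 : (0:ℤ) < (n:ℤ) := by positivity
    have h1 : 0 ≤ a % n := Int.emod_nonneg _ (by omega)
    have h2 : a % n < n := Int.emod_lt_of_pos _ h0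
    have heq : Eqv n a (((a % n).toNat : ℕ) : ℤ) := by
      have e : (((a % n).toNat : ℕ) : ℤ) = a % n := by omega
      rw [e]
      have hq := Int.mul_ediv_add_emod a (n : ℤ)
      exact ⟨-(a / n), by rw [mul_neg]; omega⟩
    rw [hT, Finset.mem_filter, Finset.mem_range]
    refine ⟨by omega, ?_, ?_⟩
    · rw [← hclass hgg.1 heq]; exact hga
    · rw [← hclass hgh.1 heq]; exact hha
  obtain ⟨i, hiT, hmax⟩ := T.exists_max_image (fun i => h (i : ℤ)) hTne
  rw [hT, Finset.mem_filter] at hiT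
  refine ⟨(i : ℤ), hiT.2.1, hiT.2.2, ?_⟩
  intro b hb hbe x hx hbx hd
  by_cases hgb : g b = ⊤
  · -- b's class is in T; use maximality
    have hhb : h b ≤ h (i:ℤ) := by
      have h0 : (0:ℤ) < (n:ℤ) := by positivity
      have h1 : 0 ≤ b % n := Int.emod_nonneg _ (by omega)
      have h2 : b % n < n := Int.emod_lt_of_pos _ h0
      have heq : Eqv n b (((b % n).toNat : ℕ) : ℤ) := by
        have e : (((b % n).toNat : ℕ) : ℤ) = b % n := by omega
        rw [e]
        have hq := Int.mul_ediv_add_emod b (n : ℤ)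
        exact ⟨-(b / n), by rw [mul_neg]; omega⟩
      have hmem : (b % n).toNat ∈ T := by
        rw [hT, Finset.mem_filter, Finset.mem_range]
        refine ⟨by omega, ?_, ?_⟩
        · rw [← hclass hgg.1 heq]; exact hgb
        · rw [← hclass hgh.1 heq]; exact hb
      have := hmax _ hmem
      rwa [← hclass hgh.1 heq] at this
    -- h x = h i
    have hxi : h x = h (i : ℤ) := hclass hgh.1 (eqv_symm hx)
    cases hk : h x with
    | top => exact hiT.2.2 (hxi ▸ hk)
    | coe k =>
      rcases Nat.eq_zero_or_pos k with rfl | hkpos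
      · -- h b ≤ h i = 0, Dr h b x gives x ≤ b
        have : h b ≤ ((0:ℕ) : ℕ∞) := le_trans hhb (by rw [← hxi, hk])
        have h2 := le_trans hd this
        rw [Nat.cast_le] at h2
        omega
      · have hdxc : Dr h x (x + k) := by
          rw [Dr, hk]
          exact Nat.cast_le.2 (by omega)
        have hdbc : Dr h b (x + k) := hgh.2 b x (x + k) hbx (by omega) hd hdxc
        have h2 : ((x + k - b).toNat : ℕ∞) ≤ ((k:ℕ) : ℕ∞) := by
          refine le_trans hdbc (le_trans hhb ?_)
          rw [← hxi, hk]
        rw [Nat.cast_le] at h2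
        omega
  · -- g b ≠ ⊤ : reach ⊤ in g, contradiction
    have hdg : Dr g b x := le_trans hd (hle b)
    have hgx : g x = ⊤ := by
      rw [hclass hgg.1 (eqv_symm hx)]
      exact hiT.2.1
    exact hgb (reach_top hgg.2 hbx hdg hgx)

end T17
namespace T17

lemma ncard_finite {α : Type*} {C : Set α} {m : ℕ} (h : C.ncard = m) (hm : m ≠ 0) :
    C.Finite := by
  by_contra h'
  rw [Set.Infinite.ncard (by simpa using h')] at h
  exact hm h.symm

lemma tbot_avoids {n : ℕ} : (tbot n).Avoids312 := avoids_mk _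
lemma ttop_avoids {n : ℕ} : (ttop n).Avoids312 := avoids_mk _

lemma tbot_allfin {n : ℕ} : ∀ a, hf (tbot n) a ≠ ⊤ := by
  intro a
  rw [hf_tbot]
  simp

lemma tbot_real {n : ℕ} (hn : 1 ≤ n) : (tbot n).IsReal :=
  real_of_allfin tbot_avoids hn tbot_allfin

lemma not_eqv_01 {n : ℕ} (hn : 2 ≤ n) : ¬ Eqv n 0 1 := by
  intro hd
  have h1 : (n:ℤ) ∣ 1 := by simpa [Eqv] using hd
  have := Int.le_of_dvd one_pos h1
  omega

lemma ttop_real {n : ℕ} (hn : 2 ≤ n) : (ttop n).IsReal := by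
  refine real_of_multi ttop_avoids (by omega) (not_eqv_01 hn) ?_ ?_ <;>
    · rw [hf_ttop]

lemma ttop_not_allfin {n : ℕ} : ¬ ∀ a, hf (ttop n) a ≠ ⊤ := by
  intro h
  exact h 0 (by rw [hf_ttop])

lemma top_le_eq {x : ℕ∞} (h : (⊤:ℕ∞) ≤ x) : x = ⊤ := top_le_iff.1 h

theorem dirA {n : ℕ} (hn : 2 ≤ n) {k : ℕ} {C : Set (TITO n)}
    (hmax : IsMaxChainIn {t : TITO n | t.Avoids312 ∧ t.IsReal} C) (hcard : C.ncard = k + 1) :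
    ∃ C' : Set (TITO n), IsMaxChainIn {t : TITO n | t.Avoids312} C' ∧ C'.ncard = k + 2 := by
  classical
  have hchain := hmax.1
  have hcrit := ((maxchain_iff _ C).1 hmax).2
  have hCfin : C.Finite := ncard_finite hcard (by omega)
  have hav : ∀ x ∈ C, x.Avoids312 := fun x hx => (hchain.1 hx).1
  have hrl : ∀ x ∈ C, x.IsReal := fun x hx => (hchain.1 hx).2
  have hbotC : tbot n ∈ C :=
    hcrit _ ⟨tbot_avoids, tbot_real (by omega)⟩ (fun x _ => Or.inl (tbot_le x))
  have htopC : ttop n ∈ C :=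
    hcrit _ ⟨ttop_avoids, ttop_real hn⟩ (fun x _ => Or.inr (le_ttop x))
  set CF : Set (TITO n) := {x ∈ C | ∀ a, hf x a ≠ ⊤} with hCF
  set CB : Set (TITO n) := {x ∈ C | ¬ ∀ a, hf x a ≠ ⊤} with hCB
  have hbotCF : tbot n ∈ CF := Set.mem_sep hbotC tbot_allfin
  have htopCB : ttop n ∈ CB := Set.mem_sep htopC ttop_not_allfin
  obtain ⟨u, huCF, humax⟩ := chain_max (hCfin.subset (Set.sep_subset _ _))
    ⟨tbot n, hbotCF⟩
    (fun x hx y hy => hchain.2 x hx.1 y hy.1)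
  obtain ⟨v, hvCB, hvmin⟩ := chain_min (hCfin.subset (Set.sep_subset _ _))
    ⟨ttop n, htopCB⟩
    (fun x hx y hy => hchain.2 x hx.1 y hy.1)
  have huC : u ∈ C := huCF.1
  have hvC : v ∈ C := hvCB.1
  have huav : u.Avoids312 := hav u huC
  have hvav : v.Avoids312 := hav v hvC
  have hsep : ∀ x ∈ C, x.Inversions ⊆ u.Inversions ∨ v.Inversions ⊆ x.Inversions := by
    intro x hx
    by_cases hx' : ∀ a, hf x a ≠ ⊤
    · exact Or.inl (humax x ⟨hx, hx'⟩)
    · exact Or.inr (hvmin x ⟨hx, hx'⟩)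
  have hexa : ∃ a, hf v a = ⊤ ∧ hf u a ≠ ⊤ := by
    have := hvCB.2
    push_neg at this
    obtain ⟨a, ha⟩ := this
    exact ⟨a, ha, huCF.2 a⟩
  have huv : ∀ a, hf u a ≤ hf v a := by
    rcases hchain.2 u huC v hvC with h | h
    · exact (inv_subset_iff huav hvav).1 h
    · obtain ⟨a, ha, _⟩ := hexa
      have := (inv_subset_iff hvav huav).1 h a
      rw [ha] at this
      exact absurd (top_le_eq this) (huCF.2 a)
  obtain ⟨r, hvr, hur, hno⟩ := selectR hn (good_hf huav) (good_hf hvav) huv hexa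
  have hgood : Good n (upd n (hf u) r ⊤) := conA (good_hf huav) hno
  set g : TITO n := mk n (upd n (hf u) r ⊤) hgood with hgdef
  have hgav : g.Avoids312 := avoids_mk _
  have hfg : hf g = upd n (hf u) r ⊤ := hf_mk _
  have hsing : SingT n (hf g) r := by
    rw [hfg]
    exact ⟨fun x hx => upd_eqv hx, fun b hb => by rw [upd_not hb]; exact huCF.2 b⟩
  have hgnr : ¬ g.IsReal := not_real_of_single hgav (by omega) hsing.1 hsing.2
  have hgC : g ∉ C := fun hc => hgnr (hrl g hc)
  have hug : ∀ a, hf u a ≤ hf g a := by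
    intro a
    rw [hfg]
    by_cases he : Eqv n r a
    · rw [upd_eqv he]; exact le_top
    · rw [upd_not he]
  have hvtopclass : ∀ a, Eqv n r a → hf v a = ⊤ := by
    intro a he
    rw [← hclass (good_hf hvav).1 he]
    exact hvr
  have hgv : ∀ a, hf g a ≤ hf v a := by
    intro a
    rw [hfg]
    by_cases he : Eqv n r a
    · rw [upd_eqv he, hvtopclass a he]
    · rw [upd_not he]; exact huv a
  have hPP : ∀ x ∈ C, x ∈ {t : TITO n | t.Avoids312} := fun x hx => (hchain.1 hx).1
  refine ⟨insert g C, ?_, ?_⟩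
  · rw [maxchain_iff]
    refine ⟨⟨?_, ?_⟩, ?_⟩
    · rintro x (rfl | hx)
      · exact hgav
      · exact hPP x hx
    · rintro x (rfl | hx) y (rfl | hy)
      · exact Or.inl (subset_refl _)
      · rcases hsep y hy with h | h
        · exact Or.inr (h.trans ((inv_subset_iff huav hgav).2 hug))
        · exact Or.inl (((inv_subset_iff hgav hvav).2 hgv).trans h)
      · rcases hsep x hx with h | h
        · exact Or.inl (h.trans ((inv_subset_iff huav hgav).2 hug))
        · exact Or.inr (((inv_subset_iff hgav hvav).2 hgv).trans h)
      · exact hchain.2 x hx y hy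
    · intro z hz hcmp
      by_cases hzr : z.IsReal
      · exact Set.mem_insert_iff.2 (Or.inr (hcrit z ⟨hz, hzr⟩
          (fun x hx => hcmp x (Set.mem_insert_of_mem g hx))))
      · obtain ⟨r'', hs''⟩ := (not_real_iff' hz (by omega)).1 hzr
        have hCFz : ∀ x ∈ CF, x.Inversions ⊆ z.Inversions := by
          intro x hx
          rcases hcmp x (Set.mem_insert_of_mem g hx.1) with h | h
          · exfalso
            have := (inv_subset_iff hz (hav x hx.1)).1 h r''
            rw [hs''.1 r'' (eqv_refl r'')] at this
            exact hx.2 r'' (top_le_eq this)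
          · exact h
        have hCBz : ∀ y ∈ CB, z.Inversions ⊆ y.Inversions := by
          intro y hy
          rcases hcmp y (Set.mem_insert_of_mem g hy.1) with h | h
          · exact h
          · exfalso
            have hyz := (inv_subset_iff (hav y hy.1) hz).1 h
            have hyex := hy.2
            push_neg at hyex
            obtain ⟨a, ha⟩ := hyex
            have hza : hf z a = ⊤ := top_le_eq (ha ▸ hyz a)
            have hra : Eqv n r'' a := by
              by_contra hc
              exact hs''.2 a hc hza
            have hsy : SingT n (hf y) r'' := by
              constructor
              · intro x hx
                rw [hclass (good_hf (hav y hy.1)).1 (eqv_tr (eqv_symm hra) hx)] at ha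
                exact ha
              · intro b hb hbtop
                have : hf z b = ⊤ := top_le_eq (hbtop ▸ hyz b)
                exact hs''.2 b hb this
            exact (not_real_of_single (hav y hy.1) (by omega) hsy.1 hsy.2) (hrl y hy.1)
        have huz : ∀ a, hf u a ≤ hf z a := (inv_subset_iff huav hz).1 (hCFz u huCF)
        have hzv : ∀ a, hf z a ≤ hf v a := (inv_subset_iff hz hvav).1 (hCBz v hvCB)
        have hgz' : Good n (upd n (hf z) r'' ((n-1 : ℕ) : ℕ∞)) :=
          conB (good_hf hz) hn hs''.1 hs''.2
        set z' : TITO n := mk n _ hgz' with hz'def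
        have hz'av : z'.Avoids312 := avoids_mk _
        have hfz' : hf z' = upd n (hf z) r'' ((n-1 : ℕ) : ℕ∞) := hf_mk _
        have hz'fin : ∀ a, hf z' a ≠ ⊤ := by
          intro a
          rw [hfz']
          by_cases he : Eqv n r'' a
          · rw [upd_eqv he]; simp
          · rw [upd_not he]; exact hs''.2 a he
        have hz'rl : z'.IsReal := real_of_allfin hz'av (by omega) hz'fin
        have huz' : ∀ a, hf u a ≤ hf z' a := by
          intro a
          rw [hfz']
          by_cases he : Eqv n r'' a
          · rw [upd_eqv he]; exact fin_le (good_hf huav) (by omega) (huCF.2 a)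
          · rw [upd_not he]; exact huz a
        have hz'v : ∀ a, hf z' a ≤ hf v a := by
          intro a
          rw [hfz']
          by_cases he : Eqv n r'' a
          · rw [upd_eqv he]
            have : hf v a = ⊤ := by
              have h1 : hf z r'' = ⊤ := hs''.1 r'' (eqv_refl r'')
              have h2 := hzv r''
              rw [h1] at h2
              have h3 := top_le_eq h2
              rw [← hclass (good_hf hvav).1 he]
              exact h3
            rw [this]; exact le_top
          · rw [upd_not he]; exact hzv a
        have hz'C : z' ∈ C := by
          refine hcrit z' ⟨hz'av, hz'rl⟩ (fun x hx => ?_)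
          rcases hsep x hx with h | h
          · exact Or.inr (h.trans ((inv_subset_iff huav hz'av).2 huz'))
          · exact Or.inl (((inv_subset_iff hz'av hvav).2 hz'v).trans h)
        have hz'u : z' = u :=
          tito_ext (Set.Subset.antisymm (humax z' ⟨hz'C, hz'fin⟩)
            ((inv_subset_iff huav hz'av).2 huz'))
        have hfu_eq : hf u = upd n (hf z) r'' ((n-1 : ℕ) : ℕ∞) := by
          rw [← hz'u, hfz']
        by_cases hrr : Eqv n r r''
        · have hzeq : hf z = hf g := by
            funext a
            by_cases he : Eqv n r a
            · have he'' : Eqv n r'' a := eqv_tr (eqv_symm hrr) he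
              rw [hs''.1 a he'', hfg, upd_eqv he]
            · have he'' : ¬ Eqv n r'' a := fun hc => he (eqv_tr hrr hc)
              have e1 : hf z a = hf u a := by
                rw [hfu_eq, upd_not he'']
              rw [e1, hfg, upd_not he]
          have : z = g := by
            refine tito_ext ?_
            rw [inv_char hz, inv_char hgav, hzeq]
          rw [this]
          exact Set.mem_insert g C
        · exfalso
          rcases hcmp g (Set.mem_insert g C) with h | h
          · have h1 := (inv_subset_iff hz hgav).1 h r''
            rw [hs''.1 r'' (eqv_refl _)] at h1
            have h2 := top_le_eq h1
            rw [hfg, upd_not hrr] at h2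
            exact huCF.2 r'' h2
          · have h1 := (inv_subset_iff hgav hz).1 h r
            rw [hfg, upd_eqv (eqv_refl r)] at h1
            exact hs''.2 r (fun hc => hrr (eqv_symm hc)) (top_le_eq h1)
  · rw [Set.ncard_insert_of_notMem hgC hCfin, hcard]

end T17
namespace T17

lemma anti_ext {n : ℕ} {t t' : TITO n} (h1 : t.Inversions ⊆ t'.Inversions)
    (h2 : t'.Inversions ⊆ t.Inversions) : t = t' :=
  tito_ext (Set.Subset.antisymm h1 h2)

theorem dirB {n : ℕ} (hn : 2 ≤ n) {k : ℕ} {C : Set (TITO n)}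
    (hmax : IsMaxChainIn {t : TITO n | t.Avoids312} C) (hcard : C.ncard = k + 2) :
    ∃ C'' : Set (TITO n), IsMaxChainIn {t : TITO n | t.Avoids312 ∧ t.IsReal} C'' ∧
      C''.ncard = k + 1 := by
  classical
  have hchain := hmax.1
  have hcrit := ((maxchain_iff _ C).1 hmax).2
  have hCfin : C.Finite := ncard_finite hcard (by omega)
  have hav : ∀ x ∈ C, x.Avoids312 := fun x hx => hchain.1 hx
  have hbotC : tbot n ∈ C := hcrit _ tbot_avoids (fun x _ => Or.inl (tbot_le x))
  have htopC : ttop n ∈ C := hcrit _ ttop_avoids (fun x _ => Or.inr (le_ttop x))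
  set CF : Set (TITO n) := {x ∈ C | ∀ a, hf x a ≠ ⊤} with hCFdef
  set CN : Set (TITO n) := {x ∈ C | ¬ x.IsReal} with hCNdef
  set CB : Set (TITO n) := {x ∈ C | x.IsReal ∧ ¬ ∀ a, hf x a ≠ ⊤} with hCBdef
  have hCFreal : ∀ x ∈ CF, x.IsReal := fun x hx =>
    real_of_allfin (hav x hx.1) (by omega) hx.2
  have hpart : ∀ x ∈ C, x ∈ CF ∨ x ∈ CN ∨ x ∈ CB := by
    intro x hx
    by_cases h1 : ∀ a, hf x a ≠ ⊤
    · exact Or.inl ⟨hx, h1⟩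
    · by_cases h2 : x.IsReal
      · exact Or.inr (Or.inr ⟨hx, h2, h1⟩)
      · exact Or.inr (Or.inl ⟨hx, h2⟩)
  have hbotCF : tbot n ∈ CF := Set.mem_sep hbotC tbot_allfin
  have htopCB : ttop n ∈ CB := Set.mem_sep htopC ⟨ttop_real hn, ttop_not_allfin⟩
  obtain ⟨u, huCF, humax⟩ := chain_max (hCfin.subset (Set.sep_subset _ _))
    ⟨tbot n, hbotCF⟩ (fun x hx y hy => hchain.2 x hx.1 y hy.1)
  obtain ⟨v, hvCB, hvmin⟩ := chain_min (hCfin.subset (Set.sep_subset _ _))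
    ⟨ttop n, htopCB⟩ (fun x hx y hy => hchain.2 x hx.1 y hy.1)
  have huC : u ∈ C := huCF.1
  have hvC : v ∈ C := hvCB.1
  have huav : u.Avoids312 := hav u huC
  have hvav : v.Avoids312 := hav v hvC
  -- order between the parts
  have hFN : ∀ x ∈ CF, ∀ y ∈ CN, x.Inversions ⊆ y.Inversions := by
    intro x hx y hy
    rcases hchain.2 x hx.1 y hy.1 with h | h
    · exact h
    · exfalso
      obtain ⟨ry, hsy⟩ := (not_real_iff' (hav y hy.1) (by omega)).1 hy.2
      have := (inv_subset_iff (hav y hy.1) (hav x hx.1)).1 h ry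
      rw [hsy.1 ry (eqv_refl _)] at this
      exact hx.2 ry (top_le_eq this)
  have hFB : ∀ x ∈ CF, ∀ w ∈ CB, x.Inversions ⊆ w.Inversions := by
    intro x hx w hw
    rcases hchain.2 x hx.1 w hw.1 with h | h
    · exact h
    · exfalso
      have hwex := hw.2.2
      push_neg at hwex
      obtain ⟨a, ha⟩ := hwex
      have := (inv_subset_iff (hav w hw.1) (hav x hx.1)).1 h a
      rw [ha] at this
      exact hx.2 a (top_le_eq this)
  have hNB : ∀ y ∈ CN, ∀ w ∈ CB, y.Inversions ⊆ w.Inversions := by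
    intro y hy w hw
    rcases hchain.2 y hy.1 w hw.1 with h | h
    · exact h
    · exfalso
      obtain ⟨ry, hsy⟩ := (not_real_iff' (hav y hy.1) (by omega)).1 hy.2
      have hwy := (inv_subset_iff (hav w hw.1) (hav y hy.1)).1 h
      have hwex := hw.2.2
      push_neg at hwex
      obtain ⟨a, ha⟩ := hwex
      have hya : hf y a = ⊤ := top_le_eq (ha ▸ hwy a)
      have hra : Eqv n ry a := by
        by_contra hc
        exact hsy.2 a hc hya
      have hsw : SingT n (hf w) ry := by
        constructor
        · intro x hx
          rw [hclass (good_hf (hav w hw.1)).1 (eqv_tr (eqv_symm hra) hx)] at ha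
          exact ha
        · intro b hb hbtop
          exact hsy.2 b hb (top_le_eq (hbtop ▸ hwy b))
      exact (not_real_of_single (hav w hw.1) (by omega) hsw.1 hsw.2) hw.2.1
  -- CN is nonempty
  have hCNne : CN.Nonempty := by
    by_contra hCNe
    rw [Set.not_nonempty_iff_eq_empty] at hCNe
    have hsep : ∀ x ∈ C, x.Inversions ⊆ u.Inversions ∨ v.Inversions ⊆ x.Inversions := by
      intro x hx
      rcases hpart x hx with h | h | h
      · exact Or.inl (humax x h)
      · exact absurd (hCNe ▸ h) (Set.notMem_empty x)
      · exact Or.inr (hvmin x h)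
    have hexa : ∃ a, hf v a = ⊤ ∧ hf u a ≠ ⊤ := by
      have := hvCB.2.2
      push_neg at this
      obtain ⟨a, ha⟩ := this
      exact ⟨a, ha, huCF.2 a⟩
    have huv : ∀ a, hf u a ≤ hf v a := by
      rcases hchain.2 u huC v hvC with h | h
      · exact (inv_subset_iff huav hvav).1 h
      · obtain ⟨a, ha, _⟩ := hexa
        have := (inv_subset_iff hvav huav).1 h a
        rw [ha] at this
        exact absurd (top_le_eq this) (huCF.2 a)
    obtain ⟨r, hvr, _, hno⟩ := selectR hn (good_hf huav) (good_hf hvav) huv hexa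
    have hgood : Good n (upd n (hf u) r ⊤) := conA (good_hf huav) hno
    set g : TITO n := mk n (upd n (hf u) r ⊤) hgood with hgdef
    have hgav : g.Avoids312 := avoids_mk _
    have hfg : hf g = upd n (hf u) r ⊤ := hf_mk _
    have hug : ∀ a, hf u a ≤ hf g a := by
      intro a
      rw [hfg]
      by_cases he : Eqv n r a
      · rw [upd_eqv he]; exact le_top
      · rw [upd_not he]
    have hgv : ∀ a, hf g a ≤ hf v a := by
      intro a
      rw [hfg]
      by_cases he : Eqv n r a
      · rw [upd_eqv he, ← hclass (good_hf hvav).1 he, hvr]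
      · rw [upd_not he]; exact huv a
    have hgC : g ∈ C := by
      refine hcrit g hgav (fun x hx => ?_)
      rcases hsep x hx with h | h
      · exact Or.inr (h.trans ((inv_subset_iff huav hgav).2 hug))
      · exact Or.inl (((inv_subset_iff hgav hvav).2 hgv).trans h)
    have hsing : SingT n (hf g) r := by
      rw [hfg]
      exact ⟨fun x hx => upd_eqv hx, fun b hb => by rw [upd_not hb]; exact huCF.2 b⟩
    have hgnr : ¬ g.IsReal := not_real_of_single hgav (by omega) hsing.1 hsing.2
    have : g ∈ CN := ⟨hgC, hgnr⟩
    rw [hCNe] at this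
    exact Set.notMem_empty g this
  obtain ⟨hm, hmCN, hNmax⟩ := chain_max (hCfin.subset (Set.sep_subset _ _)) hCNne
    (fun x hx y hy => hchain.2 x hx.1 y hy.1)
  obtain ⟨h1, h1CN, hNmin⟩ := chain_min (hCfin.subset (Set.sep_subset _ _)) hCNne
    (fun x hx y hy => hchain.2 x hx.1 y hy.1)
  obtain ⟨r, hsm⟩ := (not_real_iff' (hav hm hmCN.1) (by omega)).1 hmCN.2
  have hsAll : ∀ y ∈ CN, SingT n (hf y) r := by
    intro y hy
    obtain ⟨ry, hsy⟩ := (not_real_iff' (hav y hy.1) (by omega)).1 hy.2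
    have hym := (inv_subset_iff (hav y hy.1) (hav hm hmCN.1)).1 (hNmax y hy)
    have h2 : hf hm ry = ⊤ := top_le_eq ((hsy.1 ry (eqv_refl _)) ▸ hym ry)
    have h3 : Eqv n r ry := by
      by_contra hc
      exact hsm.2 ry hc h2
    exact singT_eqv hsy (eqv_symm h3)
  -- τ map
  set F : TITO n → TITO n := fun y =>
    if hy : Good n (upd n (hf y) r ((n-1 : ℕ) : ℕ∞)) then mk n _ hy else y with hFdef
  have hFgood : ∀ y ∈ CN, Good n (upd n (hf y) r ((n-1 : ℕ) : ℕ∞)) := fun y hy =>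
    conB (good_hf (hav y hy.1)) hn (hsAll y hy).1 (hsAll y hy).2
  have hFeq : ∀ (y : TITO n) (hg : Good n (upd n (hf y) r ((n-1 : ℕ) : ℕ∞))),
      F y = mk n _ hg := by
    intro y hg
    simp only [hFdef]
    exact dif_pos hg
  have hfF : ∀ y ∈ CN, hf (F y) = upd n (hf y) r ((n-1 : ℕ) : ℕ∞) := by
    intro y hy
    rw [hFeq y (hFgood y hy), hf_mk]
  have hFav : ∀ y ∈ CN, (F y).Avoids312 := by
    intro y hy
    rw [hFeq y (hFgood y hy)]
    exact avoids_mk _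
  have hFfin : ∀ y ∈ CN, ∀ a, hf (F y) a ≠ ⊤ := by
    intro y hy a
    rw [hfF y hy]
    by_cases he : Eqv n r a
    · rw [upd_eqv he]; simp
    · rw [upd_not he]; exact (hsAll y hy).2 a he
  have hFreal : ∀ y ∈ CN, (F y).IsReal := fun y hy =>
    real_of_allfin (hFav y hy) (by omega) (hFfin y hy)
  have hFmono : ∀ y ∈ CN, ∀ y' ∈ CN, y.Inversions ⊆ y'.Inversions →
      (F y).Inversions ⊆ (F y').Inversions := by
    intro y hy y' hy' hle
    refine (inv_subset_iff (hFav y hy) (hFav y' hy')).2 fun a => ?_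
    rw [hfF y hy, hfF y' hy']
    by_cases he : Eqv n r a
    · rw [upd_eqv he, upd_eqv he]
    · rw [upd_not he, upd_not he]
      exact (inv_subset_iff (hav y hy.1) (hav y' hy'.1)).1 hle a
  have hFinj : Set.InjOn F CN := by
    intro y hy y' hy' heq
    have hfeq : hf y = hf y' := by
      funext a
      by_cases he : Eqv n r a
      · rw [(hsAll y hy).1 a he, (hsAll y' hy').1 a he]
      · have h2 : hf (F y) a = hf (F y') a := by rw [heq]
        rw [hfF y hy, hfF y' hy', upd_not he, upd_not he] at h2
        exact h2
    refine tito_ext ?_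
    rw [inv_char (hav y hy.1), inv_char (hav y' hy'.1), hfeq]
  -- u = F h1
  have huh1 : ∀ a, hf u a ≤ hf (F h1) a := by
    intro a
    rw [hfF h1 h1CN]
    by_cases he : Eqv n r a
    · rw [upd_eqv he]; exact fin_le (good_hf huav) (by omega) (huCF.2 a)
    · rw [upd_not he]
      exact (inv_subset_iff huav (hav h1 h1CN.1)).1 (hFN u huCF h1 h1CN) a
  have hFh1N : ∀ y ∈ CN, (F h1).Inversions ⊆ y.Inversions := by
    intro y hy
    refine (inv_subset_iff (hFav h1 h1CN) (hav y hy.1)).2 fun a => ?_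
    rw [hfF h1 h1CN]
    by_cases he : Eqv n r a
    · rw [upd_eqv he, (hsAll y hy).1 a he]; exact le_top
    · rw [upd_not he]
      exact (inv_subset_iff (hav h1 h1CN.1) (hav y hy.1)).1 (hNmin y hy) a
  have hFh1C : F h1 ∈ C := by
    refine hcrit (F h1) (hFav h1 h1CN) (fun x hx => ?_)
    rcases hpart x hx with h | h | h
    · exact Or.inr ((humax x h).trans ((inv_subset_iff huav (hFav h1 h1CN)).2 huh1))
    · exact Or.inl (hFh1N x h)
    · exact Or.inl ((hFh1N hm hmCN).trans (hNB hm hmCN x h))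
  have huF : u = F h1 := by
    refine anti_ext ((inv_subset_iff huav (hFav h1 h1CN)).2 huh1) ?_
    exact humax (F h1) ⟨hFh1C, hFfin h1 h1CN⟩
  -- the new chain
  set A : Set (TITO n) := CF ∪ CB with hAdef
  set C'' : Set (TITO n) := A ∪ (F '' CN) with hC''def
  have hC''RR : C'' ⊆ {t : TITO n | t.Avoids312 ∧ t.IsReal} := by
    rintro x ((hx | hx) | ⟨y, hy, rfl⟩)
    · exact ⟨hav x hx.1, hCFreal x hx⟩
    · exact ⟨hav x hx.1, hx.2.1⟩
    · exact ⟨hFav y hy, hFreal y hy⟩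
  -- comparabilities needed for chain
  have hFyB : ∀ y ∈ CN, ∀ w ∈ CB, (F y).Inversions ⊆ w.Inversions := by
    intro y hy w hw
    refine Set.Subset.trans ?_ (hNB y hy w hw)
    refine (inv_subset_iff (hFav y hy) (hav y hy.1)).2 fun a => ?_
    rw [hfF y hy]
    by_cases he : Eqv n r a
    · rw [upd_eqv he, (hsAll y hy).1 a he]; exact le_top
    · rw [upd_not he]
  have hFyF : ∀ x ∈ CF, ∀ y ∈ CN, x.Inversions ⊆ (F y).Inversions := by
    intro x hx y hy
    refine Set.Subset.trans (humax x hx) ?_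
    rw [huF]
    exact hFmono h1 h1CN y hy (hNmin y hy)
  have hpw : ∀ x ∈ C'', ∀ y ∈ C'', Cmp x y := by
    have key : ∀ x ∈ C'', ∀ y ∈ C'', x ∈ A → Cmp x y := by
      rintro x _ y hy hxA
      rcases hy with (hy | hy) | ⟨y', hy', rfl⟩
      · exact hchain.2 x (by rcases hxA with h | h; exacts [h.1, h.1]) y hy.1
      · exact hchain.2 x (by rcases hxA with h | h; exacts [h.1, h.1]) y hy.1
      · rcases hxA with h | h
        · exact Or.inl (hFyF x h y' hy')
        · exact Or.inr (hFyB y' hy' x h)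
    rintro x hx y hy
    rcases hx with hxA | ⟨x', hx', rfl⟩
    · exact key x (Or.inl hxA) y hy hxA
    · rcases hy with hyA | ⟨y', hy', rfl⟩
      · rcases key y (Or.inl hyA) (F x') (Or.inr ⟨x', hx', rfl⟩) hyA with h | h
        · exact Or.inr h
        · exact Or.inl h
      · rcases hchain.2 x' hx'.1 y' hy'.1 with h | h
        · exact Or.inl (hFmono x' hx' y' hy' h)
        · exact Or.inr (hFmono y' hy' x' hx' h)
  have hCFfin : CF.Finite := hCfin.subset (Set.sep_subset _ _)
  have hCNfin : CN.Finite := hCfin.subset (Set.sep_subset _ _)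
  have hCBfin : CB.Finite := hCfin.subset (Set.sep_subset _ _)
  have hAfin : A.Finite := hCFfin.union hCBfin
  have hBfin : (F '' CN).Finite := hCNfin.image F
  have hC''fin : C''.Finite := hAfin.union hBfin
  refine ⟨C'', (maxchain_iff _ _).2 ⟨⟨hC''RR, hpw⟩, ?_⟩, ?_⟩
  · intro z hz hcmp
    by_cases hzC'' : z ∈ C''
    · exact hzC''
    exfalso
    have hzav : z.Avoids312 := hz.1
    have hzreal : z.IsReal := hz.2
    set L : Set (TITO n) := {x ∈ C'' | x.Inversions ⊆ z.Inversions} with hLdef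
    set U : Set (TITO n) := {x ∈ C'' | z.Inversions ⊆ x.Inversions} with hUdef
    have hLU : ∀ x ∈ C'', x ∈ L ∨ x ∈ U := by
      intro x hx
      rcases hcmp x hx with h | h
      · exact Or.inr ⟨hx, h⟩
      · exact Or.inl ⟨hx, h⟩
    have hbot'' : tbot n ∈ C'' := Or.inl (Or.inl hbotCF)
    have htop'' : ttop n ∈ C'' := Or.inl (Or.inr htopCB)
    have hLne : L.Nonempty := ⟨tbot n, hbot'', tbot_le z⟩
    have hUne : U.Nonempty := ⟨ttop n, htop'', le_ttop z⟩
    obtain ⟨u', hu'L, hu'max⟩ := chain_max (C := L) (hC''fin.subset (Set.sep_subset _ _))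
      hLne (fun x hx y hy => hpw x hx.1 y hy.1)
    obtain ⟨v', hv'U, hv'min⟩ := chain_min (C := U) (hC''fin.subset (Set.sep_subset _ _))
      hUne (fun x hx y hy => hpw x hx.1 y hy.1)
    have hu'z : u'.Inversions ⊆ z.Inversions := hu'L.2
    have hzv' : z.Inversions ⊆ v'.Inversions := hv'U.2
    by_cases hv'CF : v' ∈ CF
    · -- CASE 1 : v' all-finite, in CF
      have hzfin : ∀ a, hf z a ≠ ⊤ := by
        intro a ht
        refine hv'CF.2 a (top_le_eq ?_)
        have := (inv_subset_iff hzav (hav v' hv'CF.1)).1 hzv' a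
        rwa [ht] at this
      have hadj : ∀ x ∈ C, x.Inversions ⊆ u'.Inversions ∨ v'.Inversions ⊆ x.Inversions := by
        intro x hx
        rcases hpart x hx with h | h | h
        · rcases hLU x (Or.inl (Or.inl h)) with h2 | h2
          · exact Or.inl (hu'max x h2)
          · exact Or.inr (hv'min x h2)
        · exact Or.inr (hFN v' hv'CF x h)
        · exact Or.inr (hFB v' hv'CF x h)
      have hzC : z ∈ C := by
        refine hcrit z hzav (fun x hx => ?_)
        rcases hadj x hx with h | h
        · exact Or.inr (h.trans hu'z)
        · exact Or.inl (hzv'.trans h)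
      exact hzC'' (Or.inl (Or.inl ⟨hzC, hzfin⟩))
    by_cases hv'CB : v' ∈ CB
    · -- CASE 3 : v' ∈ CB
      by_cases hveq : v' = v
      · -- subcase v' = v
        subst hveq
        have hvr_top : hf v' r = ⊤ := by
          have h2 := (inv_subset_iff (hav hm hmCN.1) (hav v' hv'CB.1)).1
            (hNB hm hmCN v' hv'CB) r
          rw [hsm.1 r (eqv_refl r)] at h2
          exact top_le_eq h2
        have hFhmC'' : F hm ∈ C'' := Or.inr ⟨hm, hmCN, rfl⟩
        have hFhmz : (F hm).Inversions ⊆ z.Inversions := by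
          rcases hLU (F hm) hFhmC'' with h | h
          · exact h.2
          · exfalso
            have h2 := (inv_subset_iff (hav v' hv'CB.1) (hFav hm hmCN)).1 (hv'min _ h) r
            rw [hvr_top] at h2
            have h3 := top_le_eq h2
            rw [hfF hm hmCN, upd_eqv (eqv_refl r)] at h3
            exact absurd h3 (by simp)
        have hadj : ∀ x ∈ C, x.Inversions ⊆ hm.Inversions ∨ v'.Inversions ⊆ x.Inversions := by
          intro x hx
          rcases hpart x hx with h | h | h
          · exact Or.inl (hFN x h hm hmCN)
          · exact Or.inl (hNmax x h)
          · exact Or.inr (hvmin x h)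
        by_cases hzt : hf z r = ⊤
        · have hmz : hm.Inversions ⊆ z.Inversions := by
            refine (inv_subset_iff (hav hm hmCN.1) hzav).2 fun a => ?_
            by_cases he : Eqv n r a
            · rw [hsm.1 a he, ← hclass (good_hf hzav).1 he, hzt]
            · have e1 : hf hm a = hf (F hm) a := by
                rw [hfF hm hmCN, upd_not he]
              rw [e1]
              exact (inv_subset_iff (hFav hm hmCN) hzav).1 hFhmz a
          have hzC : z ∈ C := by
            refine hcrit z hzav (fun x hx => ?_)
            rcases hadj x hx with h | h
            · exact Or.inr (h.trans hmz)
            · exact Or.inl (hzv'.trans h)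
          rcases hadj z hzC with h | h
          · have hzhm : z = hm := anti_ext h hmz
            exact hmCN.2 (hzhm ▸ hzreal)
          · have hzeq : z = v' := anti_ext hzv' h
            exact hzC'' (hzeq ▸ Or.inl (Or.inr hv'CB))
        · -- hf z r finite, so = n-1
          have hge : ((n-1 : ℕ) : ℕ∞) ≤ hf z r := by
            have h2 := (inv_subset_iff (hFav hm hmCN) hzav).1 hFhmz r
            rwa [hfF hm hmCN, upd_eqv (eqv_refl r)] at h2
          have hzvfin : hf z r = ((n-1 : ℕ) : ℕ∞) :=
            le_antisymm (fin_le (good_hf hzav) (by omega) hzt) hge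
          have hclsr : ∀ x, Eqv n r x → hf z x = ((n-1 : ℕ) : ℕ∞) := by
            intro x hx
            rw [← hclass (good_hf hzav).1 hx]
            exact hzvfin
          have hgoodzt : Good n (upd n (hf z) r ⊤) :=
            conA (good_hf hzav) (fun b hb _ x hx hbx => noreach_of_vfin (good_hf hzav) hn hclsr hb hx hbx)
          set zt : TITO n := mk n _ hgoodzt with hztdef
          have hztav : zt.Avoids312 := avoids_mk _
          have hfzt : hf zt = upd n (hf z) r ⊤ := hf_mk _
          have hmzt : hm.Inversions ⊆ zt.Inversions := by
            refine (inv_subset_iff (hav hm hmCN.1) hztav).2 fun a => ?_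
            rw [hfzt]
            by_cases he : Eqv n r a
            · rw [upd_eqv he]; exact le_top
            · rw [upd_not he]
              have e1 : hf hm a = hf (F hm) a := by
                rw [hfF hm hmCN, upd_not he]
              rw [e1]
              exact (inv_subset_iff (hFav hm hmCN) hzav).1 hFhmz a
          have hztv : zt.Inversions ⊆ v'.Inversions := by
            refine (inv_subset_iff hztav (hav v' hv'CB.1)).2 fun a => ?_
            rw [hfzt]
            by_cases he : Eqv n r a
            · rw [upd_eqv he, ← hclass (good_hf (hav v' hv'CB.1)).1 he, hvr_top]
            · rw [upd_not he]
              exact (inv_subset_iff hzav (hav v' hv'CB.1)).1 hzv' a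
          have hztC : zt ∈ C := by
            refine hcrit zt hztav (fun x hx => ?_)
            rcases hadj x hx with h | h
            · exact Or.inr (h.trans hmzt)
            · exact Or.inl (hztv.trans h)
          rcases hadj zt hztC with h | h
          · -- zt = hm, so z = F hm ∈ C''
            have hzthm : zt = hm := anti_ext hmzt h |>.symm
            have hzeq : hf z = hf (F hm) := by
              funext a
              by_cases he : Eqv n r a
              · rw [hclsr a he, hfF hm hmCN, upd_eqv he]
              · have e1 : hf (F hm) a = hf hm a := by
                  rw [hfF hm hmCN, upd_not he]
                have e2 : hf hm a = hf zt a := by rw [hzthm]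
                rw [e1, e2, hfzt, upd_not he]
            have : z = F hm := by
              refine tito_ext ?_
              rw [inv_char hzav, inv_char (hFav hm hmCN), hzeq]
            exact hzC'' (this ▸ Or.inr ⟨hm, hmCN, rfl⟩)
          · -- zt = v', contradiction with v' real
            have hztv' : zt = v' := anti_ext hztv h
            have hsv : SingT n (hf v') r := by
              constructor
              · intro x hx
                rw [← hztv', hfzt, upd_eqv hx]
              · intro b hb
                rw [← hztv', hfzt, upd_not hb]
                exact allfin_of_vfin (good_hf hzav) hn hzvfin hb
            exact (not_real_of_single (hav v' hv'CB.1) (by omega) hsv.1 hsv.2) hv'CB.2.1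
      · -- subcase v' ∈ CB, v' ≠ v
        have hvA2 : v ∈ L := by
          rcases hLU v (Or.inl (Or.inr hvCB)) with h | h
          · exact h
          · exfalso
            exact hveq (anti_ext (hv'min v h) (hvmin v' hv'CB))
        set A2 : Set (TITO n) := {w ∈ CB | w.Inversions ⊆ z.Inversions} with hA2def
        set B3 : Set (TITO n) := {w ∈ CB | ¬ w.Inversions ⊆ z.Inversions} with hB3def
        have hvA2' : v ∈ A2 := ⟨hvCB, hvA2.2⟩
        have hv'B3 : v' ∈ B3 := by
          refine ⟨hv'CB, fun hc => ?_⟩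
          exact hzC'' ((anti_ext hc hzv').symm ▸ hv'U.1)
        obtain ⟨p, hpA2, hpmax⟩ := chain_max (C := A2)
          ((hCBfin.subset (Set.sep_subset _ _))) ⟨v, hvA2'⟩
          (fun x hx y hy => hchain.2 x hx.1.1 y hy.1.1)
        obtain ⟨q, hqB3, hqmin⟩ := chain_min (C := B3)
          ((hCBfin.subset (Set.sep_subset _ _))) ⟨v', hv'B3⟩
          (fun x hx y hy => hchain.2 x hx.1.1 y hy.1.1)
        have hpz : p.Inversions ⊆ z.Inversions := hpA2.2
        have hzq : z.Inversions ⊆ q.Inversions := by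
          rcases hLU q (Or.inl (Or.inr hqB3.1)) with h | h
          · exact absurd h.2 hqB3.2
          · exact h.2
        have hadj : ∀ x ∈ C, x.Inversions ⊆ p.Inversions ∨ q.Inversions ⊆ x.Inversions := by
          intro x hx
          rcases hpart x hx with h | h | h
          · exact Or.inl ((hFB x h v hvCB).trans (hpmax v hvA2'))
          · exact Or.inl ((hNB x h v hvCB).trans (hpmax v hvA2'))
          · rcases hLU x (Or.inl (Or.inr h)) with h2 | h2
            · exact Or.inl (hpmax x ⟨h, h2.2⟩)
            · refine Or.inr (hqmin x ⟨h, fun hc => ?_⟩)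
              exact hzC'' ((anti_ext hc h2.2).symm ▸ Or.inl (Or.inr h))
        have hzC : z ∈ C := by
          refine hcrit z hzav (fun x hx => ?_)
          rcases hadj x hx with h | h
          · exact Or.inr (h.trans hpz)
          · exact Or.inl (hzq.trans h)
        rcases hpart z hzC with h | h | h
        · exact hzC'' (Or.inl (Or.inl h))
        · exact h.2 hzreal
        · exact hzC'' (Or.inl (Or.inr h))
    · -- CASE 2 : v' ∈ F '' CN, not in CF or CB
      have hv'im : v' ∈ F '' CN := by
        rcases hv'U.1 with (h | h) | h
        · exact absurd h hv'CF
        · exact absurd h hv'CB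
        · exact h
      obtain ⟨y₀, hy₀CN, hv'eq⟩ := hv'im
      have hy₀ne : y₀ ≠ h1 := by
        rintro rfl
        refine hv'CF ?_
        rw [← hv'eq, ← huF]
        exact huCF
      set A' : Set (TITO n) := {y ∈ CN | (F y).Inversions ⊆ z.Inversions} with hA'def
      set B2 : Set (TITO n) := {y ∈ CN | ¬ (F y).Inversions ⊆ z.Inversions} with hB2def
      have hh1A' : h1 ∈ A' := by
        refine ⟨h1CN, ?_⟩
        rw [← huF]
        rcases hLU u (Or.inl (Or.inl huCF)) with h | h
        · exact h.2
        · exfalso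
          have h2 : v'.Inversions ⊆ u.Inversions := hv'min u h
          rw [← hv'eq] at h2
          have h3 : (F h1).Inversions ⊆ (F y₀).Inversions :=
            hFmono h1 h1CN y₀ hy₀CN (hNmin y₀ hy₀CN)
          rw [huF] at h2
          exact hy₀ne (hFinj hy₀CN h1CN (anti_ext h2 h3))
      have hy₀B2 : y₀ ∈ B2 := by
        refine ⟨hy₀CN, fun hc => ?_⟩
        have hzFy : z.Inversions ⊆ (F y₀).Inversions := by rw [hv'eq]; exact hzv'
        exact hzC'' ((anti_ext hc hzFy) ▸ (Or.inr ⟨y₀, hy₀CN, rfl⟩ : F y₀ ∈ C''))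
      obtain ⟨y₁, hy₁A', hy₁max⟩ := chain_max (C := A')
        ((hCNfin.subset (Set.sep_subset _ _))) ⟨h1, hh1A'⟩
        (fun x hx y hy => hchain.2 x hx.1.1 y hy.1.1)
      obtain ⟨y₂, hy₂B2, hy₂min⟩ := chain_min (C := B2)
        ((hCNfin.subset (Set.sep_subset _ _))) ⟨y₀, hy₀B2⟩
        (fun x hx y hy => hchain.2 x hx.1.1 y hy.1.1)
      have hy₁z : (F y₁).Inversions ⊆ z.Inversions := hy₁A'.2
      have hy₁CN : y₁ ∈ CN := hy₁A'.1
      have hy₂CN : y₂ ∈ CN := hy₂B2.1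
      have hzy₂ : z.Inversions ⊆ (F y₂).Inversions := by
        rcases hLU (F y₂) (Or.inr ⟨y₂, hy₂CN, rfl⟩) with h | h
        · exact absurd h.2 hy₂B2.2
        · exact h.2
      have hadj : ∀ x ∈ C, x.Inversions ⊆ y₁.Inversions ∨ y₂.Inversions ⊆ x.Inversions := by
        intro x hx
        rcases hpart x hx with h | h | h
        · exact Or.inl (hFN x h y₁ hy₁CN)
        · rcases hLU (F x) (Or.inr ⟨x, h, rfl⟩) with h2 | h2
          · exact Or.inl (hy₁max x ⟨h, h2.2⟩)
          · refine Or.inr (hy₂min x ⟨h, fun hc => ?_⟩)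
            exact hzC'' ((anti_ext hc h2.2).symm ▸ Or.inr ⟨x, h, rfl⟩)
        · exact Or.inr (hNB y₂ hy₂CN x h)
      have hclsr : ∀ x, Eqv n r x → hf z x = ((n-1 : ℕ) : ℕ∞) := by
        intro x hx
        refine le_antisymm ?_ ?_
        · have h2 := (inv_subset_iff hzav (hFav y₂ hy₂CN)).1 hzy₂ x
          rwa [hfF y₂ hy₂CN, upd_eqv hx] at h2
        · have h2 := (inv_subset_iff (hFav y₁ hy₁CN) hzav).1 hy₁z x
          rwa [hfF y₁ hy₁CN, upd_eqv hx] at h2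
      have hgoodzt : Good n (upd n (hf z) r ⊤) :=
        conA (good_hf hzav) (fun b hb _ x hx hbx => noreach_of_vfin (good_hf hzav) hn hclsr hb hx hbx)
      set zt : TITO n := mk n _ hgoodzt with hztdef
      have hztav : zt.Avoids312 := avoids_mk _
      have hfzt : hf zt = upd n (hf z) r ⊤ := hf_mk _
      have hy₁zt : y₁.Inversions ⊆ zt.Inversions := by
        refine (inv_subset_iff (hav y₁ hy₁CN.1) hztav).2 fun a => ?_
        rw [hfzt]
        by_cases he : Eqv n r a
        · rw [upd_eqv he]; exact le_top
        · rw [upd_not he]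
          have e1 : hf y₁ a = hf (F y₁) a := by
            rw [hfF y₁ hy₁CN, upd_not he]
          rw [e1]
          exact (inv_subset_iff (hFav y₁ hy₁CN) hzav).1 hy₁z a
      have hzty₂ : zt.Inversions ⊆ y₂.Inversions := by
        refine (inv_subset_iff hztav (hav y₂ hy₂CN.1)).2 fun a => ?_
        rw [hfzt]
        by_cases he : Eqv n r a
        · rw [upd_eqv he, (hsAll y₂ hy₂CN).1 a he]
        · rw [upd_not he]
          have e1 : hf (F y₂) a = hf y₂ a := by
            rw [hfF y₂ hy₂CN, upd_not he]
          rw [← e1]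
          exact (inv_subset_iff hzav (hFav y₂ hy₂CN)).1 hzy₂ a
      have hztC : zt ∈ C := by
        refine hcrit zt hztav (fun x hx => ?_)
        rcases hadj x hx with h | h
        · exact Or.inr (h.trans hy₁zt)
        · exact Or.inl (hzty₂.trans h)
      have hzFeq : ∀ y ∈ CN, zt = y → z = F y := by
        intro y hy hzty
        have hzeq : hf z = hf (F y) := by
          funext a
          by_cases he : Eqv n r a
          · rw [hclsr a he, hfF y hy, upd_eqv he]
          · have e1 : hf (F y) a = hf y a := by
              rw [hfF y hy, upd_not he]
            have e2 : hf y a = hf zt a := by rw [hzty]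
            rw [e1, e2, hfzt, upd_not he]
        refine tito_ext ?_
        rw [inv_char hzav, inv_char (hFav y hy), hzeq]
      rcases hadj zt hztC with h | h
      · have : z = F y₁ := hzFeq y₁ hy₁CN (anti_ext hy₁zt h |>.symm)
        exact hzC'' (this ▸ Or.inr ⟨y₁, hy₁CN, rfl⟩)
      · have : z = F y₂ := hzFeq y₂ hy₂CN (anti_ext hzty₂ h)
        exact hzC'' (this ▸ Or.inr ⟨y₂, hy₂CN, rfl⟩)
  · -- cardinality
    have hdFN : Disjoint CF CN := by
      rw [Set.disjoint_left]
      intro x hx hy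
      exact hy.2 (hCFreal x hx)
    have hdFB : Disjoint CF CB := by
      rw [Set.disjoint_left]
      intro x hx hy
      exact hy.2.2 hx.2
    have hdNB : Disjoint CN CB := by
      rw [Set.disjoint_left]
      intro x hx hy
      exact hx.2 hy.2.1
    have hCeq : C = CF ∪ (CN ∪ CB) := by
      ext x
      constructor
      · intro hx
        rcases hpart x hx with h | h | h
        · exact Or.inl h
        · exact Or.inr (Or.inl h)
        · exact Or.inr (Or.inr h)
      · rintro (h | (h | h))
        exacts [h.1, h.1, h.1]
    have hcardC : CF.ncard + (CN.ncard + CB.ncard) = k + 2 := by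
      rw [← Set.ncard_union_eq hdNB hCNfin hCBfin,
          ← Set.ncard_union_eq (by
            rw [Set.disjoint_union_right]
            exact ⟨hdFN, hdFB⟩) hCFfin (hCNfin.union hCBfin), ← hCeq, hcard]
    have hcardB : (F '' CN).ncard = CN.ncard := Set.ncard_image_of_injOn hFinj
    have hAint : A ∩ (F '' CN) = {u} := by
      ext x
      constructor
      · rintro ⟨hxA, y, hy, rfl⟩
        have hfinx : ∀ a, hf (F y) a ≠ ⊤ := hFfin y hy
        have hxCF : F y ∈ CF := by
          rcases hxA with h | h
          · exact h
          · exact absurd (fun a => hfinx a) h.2.2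
        have h2 : (F y).Inversions ⊆ u.Inversions := humax (F y) hxCF
        have h3 : u.Inversions ⊆ (F y).Inversions := by
          rw [huF]
          exact hFmono h1 h1CN y hy (hNmin y hy)
        simp only [Set.mem_singleton_iff]
        exact (anti_ext h3 h2).symm
      · rintro rfl
        exact ⟨Or.inl huCF, ⟨h1, h1CN, huF.symm⟩⟩
    have hkey := Set.ncard_union_add_ncard_inter A (F '' CN) hAfin hBfin
    rw [hAint, Set.ncard_singleton, hcardB,
        Set.ncard_union_eq hdFB hCFfin hCBfin] at hkey
    have : C''.ncard + 1 = CF.ncard + CB.ncard + CN.ncard := hkey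
    omega

end T17

theorem stmt17 (n : ℕ) (hn : 2 ≤ n) (k : ℕ) :
    (∃ C : Set (TITO n),
        IsMaxChainIn {t : TITO n | t.Avoids312 ∧ t.IsReal} C ∧ C.ncard = k + 1) ↔
    (∃ C : Set (TITO n),
        IsMaxChainIn {t : TITO n | t.Avoids312} C ∧ C.ncard = k + 2) := by
  constructor
  · rintro ⟨C, h1, h2⟩
    exact T17.dirA hn h1 h2
  · rintro ⟨C, h1, h2⟩
    exact T17.dirB hn h1 h2
end

section
/- The poset of ornamentations, ordered pointwise by inclusion (ϱ ≤ ϱ′ if and only if ϱ(i) ⊆ ϱ′(i) for all i ∈ ℤ/nℤ), is order-isomorphic to the poset of 312-avoiding real TITOs under the Dyer order. -/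
/-- An ornament: a nonempty cyclically-consecutive subset of `ℤ/nℤ`. -/
def IsOrnament (n : ℕ) (o : Set (ZMod n)) : Prop :=
  ∃ (a : ZMod n) (k : ℕ), k ≤ n - 1 ∧ o = {x : ZMod n | ∃ j : ℕ, j ≤ k ∧ x = a + (j : ZMod n)}

/-- An ornament `o` is hung at `i` if `i ∈ o` and either `i - 1 ∉ o` or `o = ℤ/nℤ`. -/
def HungAt (n : ℕ) (o : Set (ZMod n)) (i : ZMod n) : Prop :=
  i ∈ o ∧ (i - 1 ∉ o ∨ o = Set.univ)

/-- An ornamentation. -/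
def IsOrnamentation (n : ℕ) (ρ : ZMod n → Set (ZMod n)) : Prop :=
  (∀ i : ZMod n, IsOrnament n (ρ i) ∧ HungAt n (ρ i) i) ∧
  (∀ i j : ZMod n, i ∈ ρ j → ρ i ⊆ ρ j)

namespace Stmt18Aux

variable {n : ℕ}

def E (a b : ℤ) : ℕ∞ := ((b - a).toNat : ℕ∞)

def Fcond (n : ℕ) (d : ZMod n → ℕ∞) : Prop :=
  ∀ x y : ℤ, x < y → E x y ≤ d (x : ZMod n) → d (y : ZMod n) + E x y ≤ d (x : ZMod n)

def Scond (n : ℕ) (d : ZMod n → ℕ∞) : Prop :=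
  ∀ i, d i = ⊤ → ∃ j, j ≠ i ∧ d j = ⊤

def inv (d : ZMod n → ℕ∞) (a b : ℤ) : Prop := a < b ∧ E a b ≤ d (a : ZMod n)

def trel (d : ZMod n → ℕ∞) (a b : ℤ) : Prop :=
  (a ≤ b ∧ ¬ inv d a b) ∨ inv d b a

lemma E_add {a b c : ℤ} (h1 : a ≤ b) (h2 : b ≤ c) : E a c = E a b + E b c := by
  unfold E
  rw [← Nat.cast_add, ← Int.toNat_add (by omega) (by omega)]
  congr 1
  omega

lemma E_mono {a b c : ℤ} (h2 : b ≤ c) : E a b ≤ E a c := by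
  unfold E
  exact_mod_cast Int.toNat_le_toNat (by omega)

lemma E_natCast (a : ℤ) (m : ℕ) : E a (a + (m : ℤ)) = (m : ℕ∞) := by
  unfold E
  simp

lemma trel_of_lt {d : ZMod n → ℕ∞} {a b : ℤ} (h : a < b) :
    trel d a b ↔ ¬ inv d a b := by
  unfold trel
  constructor
  · rintro (⟨-, h2⟩ | ⟨h2, -⟩)
    · exact h2
    · omega
  · intro h2; exact Or.inl ⟨le_of_lt h, h2⟩

lemma trel_of_gt {d : ZMod n → ℕ∞} {a b : ℤ} (h : b < a) :
    trel d a b ↔ inv d b a := by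
  unfold trel
  constructor
  · rintro (⟨h2, -⟩ | h2)
    · omega
    · exact h2
  · intro h2; exact Or.inr h2

def tito (d : ZMod n → ℕ∞) (hF : Fcond n d) : TITO n where
  rel := trel d
  refl a := Or.inl ⟨le_refl a, fun h => absurd h.1 (lt_irrefl a)⟩
  antisymm a b hab hba := by
    rcases lt_trichotomy a b with h | h | h
    · rw [trel_of_lt h] at hab
      rw [trel_of_gt h] at hba
      exact absurd hba hab
    · exact h
    · rw [trel_of_gt h] at hab
      rw [trel_of_lt h] at hba
      exact absurd hab hba
  trans a b c hab hbc := by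
    rcases eq_or_ne a b with rfl | hab' ; · exact hbc
    rcases eq_or_ne b c with rfl | hbc' ; · exact hab
    rcases eq_or_ne a c with rfl | hac'
    · exact Or.inl ⟨le_refl a, fun h => absurd h.1 (lt_irrefl a)⟩
    rcases lt_trichotomy a b with h1 | h1 | h1
    · rcases lt_trichotomy b c with h2 | h2 | h2
      · -- a < b < c
        rw [trel_of_lt h1] at hab
        have hac : a < c := h1.trans h2
        rw [trel_of_lt hac]
        rintro ⟨-, hE⟩
        exact hab ⟨h1, le_trans (E_mono h2.le) hE⟩
      · omega
      · -- c < b, a < b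
        rw [trel_of_lt h1] at hab
        rw [trel_of_gt h2] at hbc
        rcases lt_trichotomy a c with h3 | h3 | h3
        · -- a < c < b : goal ¬ inv a c
          rw [trel_of_lt h3]
          rintro ⟨-, hE⟩
          have hf := hF a c h3 hE
          refine hab ⟨h1, ?_⟩
          calc E a b = E a c + E c b := E_add h3.le h2.le
          _ ≤ E a c + d (c : ZMod n) := by exact add_le_add_right hbc.2 _
          _ = d (c : ZMod n) + E a c := add_comm _ _
          _ ≤ d (a : ZMod n) := hf
        · omega
        · -- c < a < b : goal inv c a
          rw [trel_of_gt h3]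
          exact ⟨h3, le_trans (E_mono h1.le) hbc.2⟩
    · omega
    · -- b < a
      rw [trel_of_gt h1] at hab
      rcases lt_trichotomy b c with h2 | h2 | h2
      · rw [trel_of_lt h2] at hbc
        rcases lt_trichotomy a c with h3 | h3 | h3
        · -- b < a < c : goal ¬ inv a c
          rw [trel_of_lt h3]
          rintro ⟨-, hE⟩
          have hf := hF b a h1 hab.2
          refine hbc ⟨h2, ?_⟩
          calc E b c = E b a + E a c := E_add h1.le h3.le
          _ ≤ E b a + d (a : ZMod n) := add_le_add_right hE _
          _ = d (a : ZMod n) + E b a := add_comm _ _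
          _ ≤ d (b : ZMod n) := hf
        · omega
        · -- b < c < a: vacuous
          exact absurd ⟨h2, le_trans (E_mono h3.le) hab.2⟩ hbc
      · omega
      · -- c < b < a : goal inv c a
        rw [trel_of_gt h2] at hbc
        rw [trel_of_gt (h2.trans h1)]
        refine ⟨h2.trans h1, ?_⟩
        have hf := hF c b h2 hbc.2
        calc E c a = E c b + E b a := E_add h2.le h1.le
        _ ≤ E c b + d (b : ZMod n) := add_le_add_right hab.2 _
        _ = d (b : ZMod n) + E c b := add_comm _ _
        _ ≤ d (c : ZMod n) := hf
  total a b := by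
    rcases lt_trichotomy a b with h | h | h
    · rw [trel_of_lt h, trel_of_gt h]; tauto
    · subst h; left; exact Or.inl ⟨le_refl a, fun h => absurd h.1 (lt_irrefl a)⟩
    · rw [trel_of_lt h, trel_of_gt h]; tauto
  invariant a b := by
    have hE : ∀ x y : ℤ, E (x + n) (y + n) = E x y := by
      intro x y; unfold E; congr 2; omega
    have hC : ∀ x : ℤ, ((x + (n:ℤ) : ℤ) : ZMod n) = (x : ZMod n) := by
      intro x; push_cast; simp
    unfold trel inv
    rw [hE, hE, hC, hC]
    constructor
    · rintro (⟨h1, h2⟩ | ⟨h1, h2⟩)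
      · exact Or.inl ⟨by omega, fun h => h2 ⟨by omega, h.2⟩⟩
      · exact Or.inr ⟨by omega, h2⟩
    · rintro (⟨h1, h2⟩ | ⟨h1, h2⟩)
      · exact Or.inl ⟨by omega, fun h => h2 ⟨by omega, h.2⟩⟩
      · exact Or.inr ⟨by omega, h2⟩


lemma inversions_tito (d : ZMod n → ℕ∞) (hF : Fcond n d) :
    (tito d hF).Inversions = {p : ℤ × ℤ | p.1 < p.2 ∧ E p.1 p.2 ≤ d (p.1 : ZMod n)} := by
  ext ⟨a, b⟩
  simp only [TITO.Inversions, Set.mem_setOf_eq]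
  constructor
  · rintro ⟨h1, h2⟩
    rw [show (tito d hF).rel = trel d from rfl, trel_of_gt h1] at h2
    exact ⟨h1, h2.2⟩
  · rintro ⟨h1, h2⟩
    refine ⟨h1, ?_⟩
    rw [show (tito d hF).rel = trel d from rfl, trel_of_gt h1]
    exact ⟨h1, h2⟩

lemma avoids312_tito (d : ZMod n → ℕ∞) (hF : Fcond n d) :
    (tito d hF).Avoids312 := by
  rintro ⟨a, b, c, h1, h2, h3, h4⟩
  rw [show (tito d hF).rel = trel d from rfl] at h3 h4
  rw [trel_of_gt (h1.trans h2)] at h3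
  rw [trel_of_lt h1] at h4
  exact h4 ⟨h1, le_trans (E_mono h2.le) h3.2⟩

lemma val_cast_int (hn : 2 ≤ n) (i : ZMod n) : (((i.val : ℤ)) : ZMod n) = i := by
  haveI : NeZero n := ⟨by omega⟩
  push_cast
  exact ZMod.natCast_rightInverse i

lemma d_le (hn : 2 ≤ n) (d : ZMod n → ℕ∞) (hF : Fcond n d) (i : ZMod n)
    (h : d i ≠ ⊤) : d i ≤ ((n - 1 : ℕ) : ℕ∞) := by
  by_contra hlt
  push_neg at hlt
  have hn' : ((n : ℕ) : ℕ∞) ≤ d i := by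
    lift d i to ℕ using h with k hk
    rw [Nat.cast_lt] at hlt
    exact_mod_cast Nat.le_of_pred_lt hlt
  set x : ℤ := (i.val : ℤ) with hx
  have hxc : ((x : ℤ) : ZMod n) = i := val_cast_int hn i
  have hxy : x < x + (n : ℤ) := by omega
  have hE : E x (x + (n : ℤ)) = ((n : ℕ) : ℕ∞) := by
    have := E_natCast x n
    exact_mod_cast this
  have hyc : (((x + (n : ℤ)) : ℤ) : ZMod n) = i := by
    push_cast
    simp [hxc]
  have := hF x (x + n) hxy (by rw [hE, hxc]; exact hn')
  rw [hE, hxc, hyc] at this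
  lift d i to ℕ using h with k hk
  have : (k : ℕ∞) + (n : ℕ∞) ≤ (k : ℕ∞) := this
  rw [← Nat.cast_add, Nat.cast_le] at this
  omega

lemma isreal_tito (hn : 2 ≤ n) (d : ZMod n → ℕ∞) (hF : Fcond n d) (hS : Scond n d) :
    (tito d hF).IsReal := by
  haveI : NeZero n := ⟨by omega⟩
  intro a hconv
  by_cases htop : d (a : ZMod n) = ⊤
  · obtain ⟨j, hj, hjtop⟩ := hS _ htop
    exfalso
    set v : ℕ := (j - (a : ZMod n)).val with hv
    have hv1 : 1 ≤ v := by
      rw [hv]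
      have : j - (a : ZMod n) ≠ 0 := sub_ne_zero.mpr hj
      exact ZMod.val_pos.mpr this
    have hvn : v < n := ZMod.val_lt _
    set y : ℤ := a + (v : ℤ) with hy
    have hyc : ((y : ℤ) : ZMod n) = j := by
      rw [hy]
      push_cast
      rw [ZMod.natCast_rightInverse (j - (a : ZMod n))]
      ring
    have h1 : (tito d hF).rel (a + (n : ℤ)) y := by
      rw [show (tito d hF).rel = trel d from rfl, trel_of_gt (by omega : y < a + (n:ℤ))]
      exact ⟨by omega, by rw [hyc, hjtop]; exact le_top⟩
    have h2 : (tito d hF).rel y a := by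
      rw [show (tito d hF).rel = trel d from rfl, trel_of_gt (by omega : a < y)]
      exact ⟨by omega, by rw [htop]; exact le_top⟩
    have := hconv (a + n) ⟨1, by ring⟩ a ⟨0, by ring⟩ y h1 h2
    obtain ⟨k, hk⟩ := this
    have hdvd : (n : ℤ) ∣ (v : ℤ) := ⟨k, by rw [mul_comm]; omega⟩
    have := Int.le_of_dvd (by exact_mod_cast hv1) hdvd
    omega
  · have hle := d_le hn d hF _ htop
    rw [show (tito d hF).rel = trel d from rfl, trel_of_lt (by omega : a < a + (n:ℤ))]
    rintro ⟨-, hE⟩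
    have hEeq : E a (a + (n : ℤ)) = ((n : ℕ) : ℕ∞) := by exact_mod_cast E_natCast a n
    rw [hEeq] at hE
    have := le_trans hE hle
    rw [Nat.cast_le] at this
    omega

def Iv (i : ZMod n) (k : ℕ) : Set (ZMod n) :=
  {x : ZMod n | ∃ j : ℕ, j ≤ k ∧ x = i + (j : ZMod n)}

lemma cast_inj_le (hn : 2 ≤ n) {j m : ℕ} (hj : j ≤ n - 1) (hm : m ≤ n - 1)
    (h : (j : ZMod n) = (m : ZMod n)) : j = m := by
  haveI : NeZero n := ⟨by omega⟩
  have h1 := ZMod.val_cast_of_lt (show j < n by omega)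
  have h2 := ZMod.val_cast_of_lt (show m < n by omega)
  rw [← h1, ← h2, h]

lemma mem_Iv (hn : 2 ≤ n) {i : ZMod n} {k m : ℕ} (hk : k ≤ n - 1) (hm : m ≤ n - 1) :
    i + (m : ZMod n) ∈ Iv i k ↔ m ≤ k := by
  constructor
  · rintro ⟨j, hj, heq⟩
    have : (m : ZMod n) = (j : ZMod n) := add_left_cancel heq
    rw [cast_inj_le hn hm (le_trans hj hk) this]
    exact hj
  · intro h; exact ⟨m, h, rfl⟩

lemma Iv_full (hn : 2 ≤ n) (i : ZMod n) : Iv i (n - 1) = Set.univ := by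
  haveI : NeZero n := ⟨by omega⟩
  ext x
  simp only [Set.mem_univ, iff_true]
  refine ⟨(x - i).val, by have := ZMod.val_lt (x - i); omega, ?_⟩
  rw [ZMod.natCast_rightInverse (x - i)]
  ring

lemma Iv_eq_univ_iff (hn : 2 ≤ n) {i : ZMod n} {k : ℕ} (hk : k ≤ n - 1) :
    Iv i k = Set.univ ↔ k = n - 1 := by
  constructor
  · intro h
    by_contra hne
    have : i + ((n - 1 : ℕ) : ZMod n) ∈ Iv i k := by rw [h]; trivial
    rw [mem_Iv hn hk (le_refl _)] at this
    omega
  · rintro rfl; exact Iv_full hn i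

lemma Iv_inj (hn : 2 ≤ n) {i : ZMod n} {k k' : ℕ} (hk : k ≤ n - 1) (hk' : k' ≤ n - 1)
    (h : Iv i k = Iv i k') : k = k' := by
  have h1 : i + (k : ZMod n) ∈ Iv i k' := by rw [← h]; exact ⟨k, le_refl _, rfl⟩
  have h2 : i + (k' : ZMod n) ∈ Iv i k := by rw [h]; exact ⟨k', le_refl _, rfl⟩
  rw [mem_Iv hn hk' hk] at h1
  rw [mem_Iv hn hk hk'] at h2
  omega

lemma ornament_exists_k (hn : 2 ≤ n) {o : Set (ZMod n)} {i : ZMod n}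
    (ho : IsOrnament n o) (hh : HungAt n o i) : ∃ k, k ≤ n - 1 ∧ o = Iv i k := by
  obtain ⟨a, k0, hk0, rfl⟩ := ho
  rcases hh.2 with hmiss | huniv
  · obtain ⟨j0, hj0, hieq⟩ := hh.1
    rcases Nat.eq_zero_or_pos j0 with h0 | h0
    · subst h0
      simp only [Nat.cast_zero, add_zero] at hieq
      subst hieq
      exact ⟨k0, hk0, rfl⟩
    · exfalso
      apply hmiss
      refine ⟨j0 - 1, by omega, ?_⟩
      have hsum : (j0 - 1) + 1 = j0 := by omega
      have hcast : ((j0 - 1 : ℕ) : ZMod n) + 1 = (j0 : ZMod n) := by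
        rw [← hsum, Nat.cast_add, Nat.cast_one, hsum]
      rw [hieq]
      rw [← hcast]
      ring
  · exact ⟨n - 1, le_refl _, by rw [huniv, Iv_full hn]⟩

open scoped Classical in
noncomputable def kOf (o : Set (ZMod n)) (i : ZMod n) : ℕ :=
  if h : ∃ k, k ≤ n - 1 ∧ o = Iv i k then h.choose else 0

lemma kOf_eq (hn : 2 ≤ n) {i : ZMod n} {k : ℕ} (hk : k ≤ n - 1) :
    kOf (Iv i k) i = k := by
  unfold kOf
  have h : ∃ k', k' ≤ n - 1 ∧ Iv i k = Iv i k' := ⟨k, hk, rfl⟩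
  rw [dif_pos h]
  exact (Iv_inj hn hk h.choose_spec.1 h.choose_spec.2).symm

lemma kOf_spec (hn : 2 ≤ n) {o : Set (ZMod n)} {i : ZMod n}
    (ho : IsOrnament n o) (hh : HungAt n o i) :
    kOf o i ≤ n - 1 ∧ o = Iv i (kOf o i) := by
  obtain ⟨k, hk, rfl⟩ := ornament_exists_k hn ho hh
  rw [kOf_eq hn hk]
  exact ⟨hk, rfl⟩

open scoped Classical in
noncomputable def dOf (ρ : ZMod n → Set (ZMod n)) (i : ZMod n) : ℕ∞ :=
  if ρ i = Set.univ ∧ ∃ j, j ≠ i ∧ ρ j = Set.univ then ⊤ else (kOf (ρ i) i : ℕ∞)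

lemma dOf_eq_top_iff {ρ : ZMod n → Set (ZMod n)} {i : ZMod n} :
    dOf ρ i = ⊤ ↔ (ρ i = Set.univ ∧ ∃ j, j ≠ i ∧ ρ j = Set.univ) := by
  unfold dOf
  split_ifs with h
  · simp [h]
  · simp [h]

lemma Scond_dOf (ρ : ZMod n → Set (ZMod n)) : Scond n (dOf ρ) := by
  intro i hi
  rw [dOf_eq_top_iff] at hi
  obtain ⟨hiu, j, hj, hju⟩ := hi
  refine ⟨j, hj, ?_⟩
  rw [dOf_eq_top_iff]
  exact ⟨hju, i, fun h => hj h.symm, hiu⟩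

lemma cast_add_ne (hn : 2 ≤ n) {m : ℕ} (h1 : 1 ≤ m) (h2 : m ≤ n - 1) (i : ZMod n) :
    i + (m : ZMod n) ≠ i := by
  haveI : NeZero n := ⟨by omega⟩
  intro h
  have hm0 : (m : ZMod n) = 0 := by
    have := add_left_cancel (show i + (m : ZMod n) = i + 0 by rw [add_zero]; exact h)
    exact this
  have := ZMod.val_cast_of_lt (show m < n by omega)
  rw [hm0, ZMod.val_zero] at this
  omega

lemma Fcond_dOf (hn : 2 ≤ n) {ρ : ZMod n → Set (ZMod n)} (hρ : IsOrnamentation n ρ) :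
    Fcond n (dOf ρ) := by
  intro x y hxy hE
  by_cases hT : dOf ρ (x : ZMod n) = ⊤
  · rw [hT]; exact le_top
  have hcond : ¬ (ρ (x : ZMod n) = Set.univ ∧ ∃ j, j ≠ (x : ZMod n) ∧ ρ j = Set.univ) :=
    fun h => hT (dOf_eq_top_iff.mpr h)
  have hdx : dOf ρ (x : ZMod n) = (kOf (ρ (x : ZMod n)) (x : ZMod n) : ℕ∞) := by
    unfold dOf; rw [if_neg hcond]
  set K := kOf (ρ (x : ZMod n)) (x : ZMod n) with hK
  obtain ⟨hKle, hρx⟩ := kOf_spec hn (hρ.1 (x : ZMod n)).1 (hρ.1 (x : ZMod n)).2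
  set m : ℕ := (y - x).toNat with hm
  have hm1 : 1 ≤ m := by omega
  have hEm : E x y = (m : ℕ∞) := rfl
  have hmK : m ≤ K := by
    rw [hdx, hEm, Nat.cast_le] at hE
    exact hE
  have hmn : m ≤ n - 1 := by omega
  have hyx : (y : ZMod n) = (x : ZMod n) + (m : ZMod n) := by
    have : y = x + (m : ℤ) := by omega
    rw [this]
    push_cast
    ring
  have hmem : (x : ZMod n) + ((m : ℕ) : ZMod n) ∈ ρ (x : ZMod n) := by
    rw [hρx, ← hK]
    exact (mem_Iv hn hKle hmn).mpr hmK
  have hsub : ρ (y : ZMod n) ⊆ ρ (x : ZMod n) := by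
    rw [hyx]
    exact hρ.2 _ _ hmem
  have hyne : (y : ZMod n) ≠ (x : ZMod n) := by
    rw [hyx]; exact cast_add_ne hn hm1 hmn _
  have hynu : ρ (y : ZMod n) ≠ Set.univ := by
    intro hu
    have hxu : ρ (x : ZMod n) = Set.univ := Set.univ_subset_iff.mp (hu ▸ hsub)
    exact hcond ⟨hxu, (y : ZMod n), hyne, hu⟩
  have hdy : dOf ρ (y : ZMod n) = (kOf (ρ (y : ZMod n)) (y : ZMod n) : ℕ∞) := by
    unfold dOf
    rw [if_neg (fun h => hynu h.1)]
  set L := kOf (ρ (y : ZMod n)) (y : ZMod n) with hL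
  obtain ⟨hLle, hρy⟩ := kOf_spec hn (hρ.1 (y : ZMod n)).1 (hρ.1 (y : ZMod n)).2
  rw [hdx, hdy, hEm, ← Nat.cast_add, Nat.cast_le]
  by_contra hcon
  push_neg at hcon
  -- L + m > K, i.e. K - m + 1 ≤ L
  by_cases hKfull : K = n - 1
  · -- ρ x is univ ; derive ρ y univ, contradiction
    have hxu : ρ (x : ZMod n) = Set.univ := by
      rw [hρx, ← hK, Iv_eq_univ_iff hn hKle]
      exact hKfull
    have hw : n - m ≤ L := by omega
    have hwn : n - m ≤ n - 1 := by omega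
    have hxmem : (x : ZMod n) ∈ ρ (y : ZMod n) := by
      have hcast : (y : ZMod n) + ((n - m : ℕ) : ZMod n) = (x : ZMod n) := by
        rw [hyx]
        have : ((m : ℕ) : ZMod n) + ((n - m : ℕ) : ZMod n) = ((n : ℕ) : ZMod n) := by
          rw [← Nat.cast_add]
          congr 1
          omega
        rw [add_assoc, this, ZMod.natCast_self, add_zero]
      rw [← hcast, hρy, ← hL]
      exact (mem_Iv hn hLle hwn).mpr hw
    have := hρ.2 _ _ hxmem
    rw [hxu] at this
    exact hynu (Set.univ_subset_iff.mp this)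
  · -- K < n - 1
    have hKlt : K < n - 1 := by omega
    have hw : K - m + 1 ≤ L := by omega
    have hwn : K - m + 1 ≤ n - 1 := by omega
    have hwmem : (y : ZMod n) + ((K - m + 1 : ℕ) : ZMod n) ∈ ρ (y : ZMod n) := by
      rw [hρy, ← hL]
      exact (mem_Iv hn hLle hwn).mpr hw
    have hwmem2 := hsub hwmem
    have hcast : (y : ZMod n) + ((K - m + 1 : ℕ) : ZMod n)
        = (x : ZMod n) + ((K + 1 : ℕ) : ZMod n) := by
      rw [hyx, add_assoc, ← Nat.cast_add]
      congr 2
      omega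
    rw [hcast, hρx, ← hK] at hwmem2
    rw [mem_Iv hn hKle (by omega)] at hwmem2
    omega

lemma rho_eq_of_dOf (hn : 2 ≤ n) {ρ : ZMod n → Set (ZMod n)} (hρ : IsOrnamentation n ρ)
    (i : ZMod n) :
    ρ i = {x : ZMod n | ∃ m : ℕ, m ≤ n - 1 ∧ (m : ℕ∞) ≤ dOf ρ i ∧ x = i + (m : ZMod n)} := by
  by_cases hT : dOf ρ i = ⊤
  · have hiu : ρ i = Set.univ := (dOf_eq_top_iff.mp hT).1
    rw [hiu, hT]
    ext x
    simp only [Set.mem_univ, true_iff, Set.mem_setOf_eq, le_top, true_and]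
    haveI : NeZero n := ⟨by omega⟩
    refine ⟨(x - i).val, ⟨by have := ZMod.val_lt (x - i); omega, ?_⟩⟩
    rw [ZMod.natCast_rightInverse (x - i)]
    ring
  · have hcond : ¬ (ρ i = Set.univ ∧ ∃ j, j ≠ i ∧ ρ j = Set.univ) :=
      fun h => hT (dOf_eq_top_iff.mpr h)
    have hdx : dOf ρ i = (kOf (ρ i) i : ℕ∞) := by unfold dOf; rw [if_neg hcond]
    set K := kOf (ρ i) i with hK
    obtain ⟨hKle, hρx⟩ := kOf_spec hn (hρ.1 i).1 (hρ.1 i).2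
    rw [← hK] at hρx hKle
    rw [hdx, hρx]
    ext x
    constructor
    · rintro ⟨j, hj, rfl⟩
      exact ⟨j, by omega, by rw [Nat.cast_le]; exact hj, rfl⟩
    · rintro ⟨m, hm1, hm2, rfl⟩
      rw [Nat.cast_le] at hm2
      exact ⟨m, hm2, rfl⟩

def ρFromD (d : ZMod n → ℕ∞) (i : ZMod n) : Set (ZMod n) :=
  {x : ZMod n | ∃ m : ℕ, m ≤ n - 1 ∧ (m : ℕ∞) ≤ d i ∧ x = i + (m : ZMod n)}

noncomputable def Kd (d : ZMod n → ℕ∞) (i : ZMod n) : ℕ :=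
  if d i = ⊤ then n - 1 else (d i).toNat

lemma Kd_le (hn : 2 ≤ n) {d : ZMod n → ℕ∞} (hF : Fcond n d) (i : ZMod n) :
    Kd d i ≤ n - 1 := by
  unfold Kd
  split_ifs with h
  · exact le_refl _
  · have := d_le hn d hF i h
    lift d i to ℕ using h with k hk
    rw [Nat.cast_le] at this
    simpa using this

lemma Kd_cast {d : ZMod n → ℕ∞} {i : ZMod n} (h : d i ≠ ⊤) : (Kd d i : ℕ∞) = d i := by
  unfold Kd
  rw [if_neg h]
  exact ENat.coe_toNat h

lemma rhoFromD_eq_Iv (hn : 2 ≤ n) {d : ZMod n → ℕ∞} (hF : Fcond n d) (i : ZMod n) :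
    ρFromD d i = Iv i (Kd d i) := by
  by_cases h : d i = ⊤
  · unfold ρFromD Kd
    rw [if_pos h]
    ext x
    simp only [Set.mem_setOf_eq, h, le_top, true_and, Iv]
  · have hle : (Kd d i : ℕ∞) = d i := Kd_cast h
    have hKn := Kd_le hn hF i
    ext x
    constructor
    · rintro ⟨m, hm1, hm2, rfl⟩
      rw [← hle, Nat.cast_le] at hm2
      exact ⟨m, hm2, rfl⟩
    · rintro ⟨j, hj, rfl⟩
      exact ⟨j, by omega, by rw [← hle, Nat.cast_le]; exact hj, rfl⟩

lemma neg_one_cast (hn : 2 ≤ n) : ((n - 1 : ℕ) : ZMod n) = -1 := by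
  have h2 : (n - 1) + 1 = n := by omega
  have h : ((n - 1 : ℕ) : ZMod n) + 1 = 0 := by
    have h3 : (((n - 1) + 1 : ℕ) : ZMod n) = ((n - 1 : ℕ) : ZMod n) + 1 := by push_cast; ring
    rw [← h3, h2, ZMod.natCast_self]
  linear_combination h

lemma rhoFromD_ornamentation (hn : 2 ≤ n) {d : ZMod n → ℕ∞} (hF : Fcond n d) :
    IsOrnamentation n (ρFromD d) := by
  constructor
  · intro i
    constructor
    · exact ⟨i, Kd d i, Kd_le hn hF i, rhoFromD_eq_Iv hn hF i⟩
    · constructor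
      · exact ⟨0, by omega, by simp, by simp⟩
      · by_cases h : Kd d i = n - 1
        · right
          rw [rhoFromD_eq_Iv hn hF i, h, Iv_full hn]
        · left
          rw [rhoFromD_eq_Iv hn hF i]
          rintro ⟨j, hj, heq⟩
          have hj' : j ≤ n - 1 := le_trans hj (Kd_le hn hF i)
          have hcast : i - 1 = i + ((n - 1 : ℕ) : ZMod n) := by
            rw [neg_one_cast hn]; ring
          rw [hcast] at heq
          have : ((n - 1 : ℕ) : ZMod n) = (j : ZMod n) := add_left_cancel heq
          have := cast_inj_le hn (le_refl (n-1)) hj' this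
          have hK := Kd_le hn hF i
          omega
  · intro i j hij
    obtain ⟨m, hm1, hm2, heq⟩ := hij
    rcases Nat.eq_zero_or_pos m with h0 | h0
    · subst h0
      simp only [Nat.cast_zero, add_zero] at heq
      subst heq
      exact subset_refl _
    by_cases hT : d j = ⊤
    · intro x _
      rw [rhoFromD_eq_Iv hn hF j]
      unfold Kd
      rw [if_pos hT, Iv_full hn]
      trivial
    -- d j finite
    have hx : (((j.val : ℤ)) : ZMod n) = j := val_cast_int hn j
    set x : ℤ := (j.val : ℤ) with hxdef
    have hy : (((x + (m : ℤ)) : ℤ) : ZMod n) = i := by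
      push_cast
      rw [hx, heq]
    have hEv : E x (x + (m : ℤ)) = (m : ℕ∞) := by exact_mod_cast E_natCast x m
    have hfc := hF x (x + m) (by omega) (by rw [hEv, hx]; exact hm2)
    rw [hEv, hx, hy] at hfc
    -- hfc : d i + m ≤ d j
    rintro z ⟨m', hm'1, hm'2, rfl⟩
    refine ⟨m + m', ?_, ?_, ?_⟩
    · -- m + m' ≤ n - 1 since ↑(m+m') ≤ d j ≤ n-1
      have h1 : ((m + m' : ℕ) : ℕ∞) ≤ d j := by
        rw [Nat.cast_add, add_comm]
        calc (m' : ℕ∞) + (m : ℕ∞) ≤ d i + (m : ℕ∞) := add_le_add_left hm'2 _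
        _ ≤ d j := hfc
      have h2 := le_trans h1 (d_le hn d hF j hT)
      rw [Nat.cast_le] at h2
      exact h2
    · rw [Nat.cast_add, add_comm]
      calc (m' : ℕ∞) + (m : ℕ∞) ≤ d i + (m : ℕ∞) := add_le_add_left hm'2 _
      _ ≤ d j := hfc
    · rw [heq]
      push_cast
      ring

lemma dOf_rhoFromD (hn : 2 ≤ n) {d : ZMod n → ℕ∞} (hF : Fcond n d) (hS : Scond n d) :
    dOf (ρFromD d) = d := by
  haveI : NeZero n := ⟨by omega⟩
  funext i
  by_cases hT : d i = ⊤
  · obtain ⟨j, hj, hjT⟩ := hS i hT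
    rw [hT, dOf_eq_top_iff]
    have hu : ∀ l, d l = ⊤ → ρFromD d l = Set.univ := by
      intro l hl
      rw [rhoFromD_eq_Iv hn hF l]
      unfold Kd
      rw [if_pos hl, Iv_full hn]
    exact ⟨hu i hT, j, hj, hu j hjT⟩
  · have hcond : ¬ (ρFromD d i = Set.univ ∧ ∃ j, j ≠ i ∧ ρFromD d j = Set.univ) := by
      rintro ⟨hiu, j, hj, hju⟩
      rw [rhoFromD_eq_Iv hn hF i, Iv_eq_univ_iff hn (Kd_le hn hF i)] at hiu
      rw [rhoFromD_eq_Iv hn hF j, Iv_eq_univ_iff hn (Kd_le hn hF j)] at hju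
      -- d i = n - 1 (finite), d j ≥ n - 1
      have hdi : d i = ((n - 1 : ℕ) : ℕ∞) := by rw [← Kd_cast hT, hiu]
      have hdj : ((n - 1 : ℕ) : ℕ∞) ≤ d j := by
        by_cases hjT : d j = ⊤
        · rw [hjT]; exact le_top
        · rw [← Kd_cast hjT, hju]
      set v : ℕ := (j - i).val with hv
      have hv1 : 1 ≤ v := ZMod.val_pos.mpr (sub_ne_zero.mpr hj)
      have hvn : v < n := ZMod.val_lt _
      set x : ℤ := (i.val : ℤ) with hxdef
      have hx : ((x : ℤ) : ZMod n) = i := val_cast_int hn i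
      have hy : (((x + (v : ℤ)) : ℤ) : ZMod n) = j := by
        push_cast
        rw [hx, ZMod.natCast_rightInverse (j - i)]
        ring
      have hEv : E x (x + (v : ℤ)) = (v : ℕ∞) := by exact_mod_cast E_natCast x v
      have hfc := hF x (x + v) (by omega)
        (by rw [hEv, hx, hdi, Nat.cast_le]; omega)
      rw [hEv, hx, hy, hdi] at hfc
      have : ((n - 1 : ℕ) : ℕ∞) + (v : ℕ∞) ≤ ((n - 1 : ℕ) : ℕ∞) :=
        le_trans (add_le_add_left hdj _) hfc
      rw [← Nat.cast_add, Nat.cast_le] at this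
      omega
    unfold dOf
    rw [if_neg hcond, rhoFromD_eq_Iv hn hF i, kOf_eq hn (Kd_le hn hF i), Kd_cast hT]

lemma tito_ext {t t' : TITO n} (h : ∀ a b, t.rel a b ↔ t'.rel a b) : t = t' := by
  obtain ⟨r, _, _, _, _, _⟩ := t
  obtain ⟨r', _, _, _, _, _⟩ := t'
  have : r = r' := by
    funext a b
    exact propext (h a b)
  subst this
  rfl

lemma rel_shift (t : TITO n) (q : ℤ) (x y : ℤ) :
    t.rel x y ↔ t.rel (x + q * n) (y + q * n) := by
  induction q using Int.induction_on with
  | zero => simp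
  | succ i ih =>
    rw [show x + (i + 1 : ℤ) * n = (x + i * n) + n by ring,
        show y + (i + 1 : ℤ) * n = (y + i * n) + n by ring]
    exact ih.trans (t.invariant _ _)
  | pred i ih =>
    rw [show x + (-i : ℤ) * n = (x + (-i - 1) * n) + n by ring,
        show y + (-i : ℤ) * n = (y + (-i - 1) * n) + n by ring] at ih
    exact ih.trans (t.invariant _ _).symm

lemma D_interval {t : TITO n} (h312 : t.Avoids312) {a b c : ℤ}
    (h1 : a < b) (h2 : b < c) (hc : t.rel c a) : t.rel b a := by
  rcases t.total a b with h | h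
  · exact absurd ⟨a, b, c, h1, h2, hc, h⟩ h312
  · exact h

open scoped Classical in
noncomputable def dT (t : TITO n) (i : ZMod n) : ℕ∞ :=
  if h : ∃ m : ℕ, ¬ t.rel ((i.val : ℤ) + 1 + m) (i.val : ℤ) then (Nat.find h : ℕ∞) else ⊤

lemma rel_add_iff (hn : 2 ≤ n) {t : TITO n} (h312 : t.Avoids312) (a : ℤ) (m : ℕ)
    (hm : 1 ≤ m) : t.rel (a + (m : ℤ)) a ↔ (m : ℕ∞) ≤ dT t (a : ZMod n) := by
  classical
  haveI : NeZero n := ⟨by omega⟩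
  set i : ZMod n := (a : ZMod n) with hi
  set x : ℤ := (i.val : ℤ) with hx
  have hdvd : (n : ℤ) ∣ (a - x) := by
    rw [← ZMod.intCast_zmod_eq_zero_iff_dvd]
    push_cast
    rw [val_cast_int hn i, ← hi]
    ring
  obtain ⟨q, hq⟩ := hdvd
  rw [mul_comm] at hq
  have hshift : t.rel (a + (m : ℤ)) a ↔ t.rel (x + (m : ℤ)) x := by
    have := rel_shift t q (x + (m : ℤ)) x
    rw [show x + (m : ℤ) + q * n = a + m by omega, show x + q * (n : ℤ) = a by omega] at this
    exact this.symm
  rw [hshift]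
  unfold dT
  split_ifs with h
  · set m0 := Nat.find h with hm0
    have hspec : ¬ t.rel (x + 1 + (m0 : ℤ)) x := Nat.find_spec h
    rw [Nat.cast_le]
    constructor
    · intro hrel
      by_contra hgt
      push_neg at hgt
      rcases Nat.lt_or_ge (m0 + 1) m with hlt | hge
      · exact hspec (D_interval h312 (by omega) (by push_cast; omega) hrel)
      · have : m = m0 + 1 := by omega
        subst this
        apply hspec
        rw [show x + 1 + (m0 : ℤ) = x + ((m0 + 1 : ℕ) : ℤ) by push_cast; ring]
        exact hrel
    · intro hle
      have hmin := Nat.find_min h (show m - 1 < m0 by omega)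
      push_neg at hmin
      rw [show x + (m : ℤ) = x + 1 + ((m - 1 : ℕ) : ℤ) by push_cast; omega]
      exact hmin
  · push_neg at h
    simp only [le_top, iff_true]
    have := h (m - 1)
    rw [show x + (m : ℤ) = x + 1 + ((m - 1 : ℕ) : ℤ) by push_cast; omega]
    exact this

lemma rel_iff_inv (hn : 2 ≤ n) {t : TITO n} (h312 : t.Avoids312) {a b : ℤ} (h : a < b) :
    (t.rel b a ↔ E a b ≤ dT t (a : ZMod n)) := by
  set m : ℕ := (b - a).toNat with hm
  have hb : b = a + (m : ℤ) := by omega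
  have hE : E a b = (m : ℕ∞) := rfl
  rw [hE, hb]
  exact rel_add_iff hn h312 a m (by omega)

lemma enat_le_of_forall {A B : ℕ∞} (h : ∀ m : ℕ, (m : ℕ∞) ≤ A → (m : ℕ∞) ≤ B) : A ≤ B := by
  induction A using ENat.recTopCoe with
  | top =>
    induction B using ENat.recTopCoe with
    | top => exact le_refl _
    | coe b =>
      have := h (b + 1) le_top
      rw [Nat.cast_le] at this
      omega
  | coe k => exact h k (le_refl _)

lemma enat_add_le_of_forall {A B : ℕ∞} {e : ℕ}
    (h : ∀ m : ℕ, (m : ℕ∞) ≤ A → ((m + e : ℕ) : ℕ∞) ≤ B) : A + (e : ℕ∞) ≤ B := by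
  induction A using ENat.recTopCoe with
  | top =>
    induction B using ENat.recTopCoe with
    | top => exact le_top
    | coe b =>
      have := h (b + 1) le_top
      rw [Nat.cast_le] at this
      omega
  | coe k =>
    rw [← Nat.cast_add]
    exact h k (le_refl _)

lemma Fcond_dT (hn : 2 ≤ n) {t : TITO n} (h312 : t.Avoids312) : Fcond n (dT t) := by
  intro x y hxy hE
  have hrelyx : t.rel y x := (rel_iff_inv hn h312 hxy).mpr hE
  set e : ℕ := (y - x).toNat with he
  have hEe : E x y = (e : ℕ∞) := rfl
  rw [hEe]
  apply enat_add_le_of_forall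
  intro m hm
  rcases Nat.eq_zero_or_pos m with h0 | h0
  · subst h0
    rw [Nat.zero_add, ← hEe]
    exact hE
  have hrel1 : t.rel (y + (m : ℤ)) y := (rel_add_iff hn h312 y m h0).mpr hm
  have hrel2 : t.rel (y + (m : ℤ)) x := t.trans _ _ _ hrel1 hrelyx
  have heq : y + (m : ℤ) = x + ((m + e : ℕ) : ℤ) := by push_cast; omega
  rw [heq] at hrel2
  exact (rel_add_iff hn h312 x (m + e) (by omega)).mp hrel2

lemma Scond_dT (hn : 2 ≤ n) {t : TITO n} (h312 : t.Avoids312) (hreal : t.IsReal) :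
    Scond n (dT t) := by
  intro i hi
  by_contra hcon
  push_neg at hcon
  haveI : NeZero n := ⟨by omega⟩
  set a : ℤ := (i.val : ℤ) with ha
  have hac : ((a : ℤ) : ZMod n) = i := val_cast_int hn i
  have hconv : t.OrderConvex {x : ℤ | ∃ k : ℤ, x = a + k * n} := by
    rintro x ⟨k1, hk1⟩ z hz y hxy hyz
    by_contra hyS
    have hyi : ((y : ℤ) : ZMod n) ≠ i := by
      intro hyi
      apply hyS
      have hdvd : (n : ℤ) ∣ (y - a) := by
        rw [← ZMod.intCast_zmod_eq_zero_iff_dvd]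
        push_cast
        rw [hyi, hac]
        ring
      obtain ⟨k, hk⟩ := hdvd
      exact ⟨k, by rw [mul_comm] at hk; omega⟩
    have hxc : ((x : ℤ) : ZMod n) = i := by
      rw [hk1]
      push_cast
      rw [hac]
      simp
    have hdx : dT t (x : ZMod n) = ⊤ := by rw [hxc]; exact hi
    have hylt : y < x := by
      rcases lt_trichotomy x y with hl | hl | hl
      · exfalso
        have : t.rel y x := by
          rw [rel_iff_inv hn h312 hl, hdx]
          exact le_top
        have := t.antisymm x y hxy this
        omega
      · exfalso
        apply hyi
        rw [← hl, hxc]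
      · exact hl
    have hEyx : E y x ≤ dT t (y : ZMod n) := (rel_iff_inv hn h312 hylt).mp hxy
    have hf := Fcond_dT hn h312 y x hylt hEyx
    rw [hdx] at hf
    have : dT t (y : ZMod n) = ⊤ := by
      rw [top_le_iff.mp (le_trans le_top hf : (⊤ : ℕ∞) ≤ _)]
    exact hcon _ hyi this
  have hr := hreal a hconv
  have hr2 : t.rel (a + (n : ℤ)) a := by
    have : t.rel (a + ((n : ℕ) : ℤ)) a := by
      rw [rel_add_iff hn h312 a n (by omega), hac, hi]
      exact le_top
    exact_mod_cast this
  have := t.antisymm _ _ hr hr2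
  omega

lemma trel_dT_iff (hn : 2 ≤ n) {t : TITO n} (h312 : t.Avoids312) (a b : ℤ) :
    trel (dT t) a b ↔ t.rel a b := by
  rcases lt_trichotomy a b with h | h | h
  · rw [trel_of_lt h]
    unfold inv
    rw [← rel_iff_inv hn h312 h]
    constructor
    · intro hnot
      rcases t.total a b with h1 | h1
      · exact h1
      · exact absurd ⟨h, h1⟩ hnot
    · intro h1 h2
      have := t.antisymm a b h1 h2.2
      omega
  · subst h
    simp only [iff_true_intro (t.refl a), iff_true]
    exact Or.inl ⟨le_refl a, fun hx => absurd hx.1 (lt_irrefl a)⟩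
  · rw [trel_of_gt h]
    unfold inv
    rw [← rel_iff_inv hn h312 h]
    constructor
    · exact fun hx => hx.2
    · exact fun hx => ⟨h, hx⟩

lemma dOf_ne_top {ρ : ZMod n → Set (ZMod n)} {i : ZMod n} (h : dOf ρ i ≠ ⊤) :
    dOf ρ i = (kOf (ρ i) i : ℕ∞) := by
  by_cases hc : ρ i = Set.univ ∧ ∃ j, j ≠ i ∧ ρ j = Set.univ
  · exact absurd (dOf_eq_top_iff.mpr hc) h
  · unfold dOf; rw [if_neg hc]

lemma inv_subset_iff (hn : 2 ≤ n) {d d' : ZMod n → ℕ∞} (hF : Fcond n d) (hF' : Fcond n d') :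
    (tito d hF).Inversions ⊆ (tito d' hF').Inversions ↔ ∀ i, d i ≤ d' i := by
  rw [inversions_tito, inversions_tito]
  constructor
  · intro hsub i
    apply enat_le_of_forall
    intro m hm
    rcases Nat.eq_zero_or_pos m with h0 | h0
    · subst h0; simp
    set x : ℤ := (i.val : ℤ) with hx
    have hxc : ((x : ℤ) : ZMod n) = i := val_cast_int hn i
    have hmem : ((x, x + (m : ℤ)) : ℤ × ℤ) ∈
        {p : ℤ × ℤ | p.1 < p.2 ∧ E p.1 p.2 ≤ d (p.1 : ZMod n)} := by
      refine ⟨by omega, ?_⟩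
      have hE : E x (x + (m : ℤ)) = (m : ℕ∞) := by exact_mod_cast E_natCast x m
      rw [hE, hxc]
      exact hm
    have := hsub hmem
    obtain ⟨-, h2⟩ := this
    have hE : E x (x + (m : ℤ)) = (m : ℕ∞) := by exact_mod_cast E_natCast x m
    rw [hE, hxc] at h2
    exact h2
  · rintro hle p ⟨h1, h2⟩
    exact ⟨h1, le_trans h2 (hle _)⟩

lemma rho_subset_iff (hn : 2 ≤ n) {ρ ρ' : ZMod n → Set (ZMod n)}
    (hρ : IsOrnamentation n ρ) (hρ' : IsOrnamentation n ρ') :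
    (∀ i, ρ i ⊆ ρ' i) ↔ ∀ i, dOf ρ i ≤ dOf ρ' i := by
  constructor
  · intro hsub i
    by_cases hT : dOf ρ i = ⊤
    · obtain ⟨hiu, j, hj, hju⟩ := dOf_eq_top_iff.mp hT
      have h' : dOf ρ' i = ⊤ := by
        rw [dOf_eq_top_iff]
        refine ⟨Set.univ_subset_iff.mp (hiu ▸ hsub i), j, hj,
          Set.univ_subset_iff.mp (hju ▸ hsub j)⟩
      rw [hT, h']
    · by_cases hT' : dOf ρ' i = ⊤
      · rw [hT']; exact le_top
      · rw [dOf_ne_top hT, dOf_ne_top hT', Nat.cast_le]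
        set K := kOf (ρ i) i with hK
        set K' := kOf (ρ' i) i with hK'
        obtain ⟨hKle, hρi⟩ := kOf_spec hn (hρ.1 i).1 (hρ.1 i).2
        obtain ⟨hKle', hρi'⟩ := kOf_spec hn (hρ'.1 i).1 (hρ'.1 i).2
        rw [← hK] at hρi hKle
        rw [← hK'] at hρi' hKle'
        have hmem : i + ((K : ℕ) : ZMod n) ∈ Iv i K := ⟨K, le_refl _, rfl⟩
        rw [← hρi] at hmem
        have hmem' := hsub i hmem
        rw [hρi'] at hmem'
        rw [mem_Iv hn hKle' hKle] at hmem'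
        exact hmem'
  · intro hle i x hx
    rw [rho_eq_of_dOf hn hρ i] at hx
    obtain ⟨m, h1, h2, rfl⟩ := hx
    rw [rho_eq_of_dOf hn hρ' i]
    exact ⟨m, h1, le_trans h2 (hle i), rfl⟩

end Stmt18Aux

theorem stmt18 (n : ℕ) (hn : 2 ≤ n) :
    ∃ φ : {ρ : ZMod n → Set (ZMod n) // IsOrnamentation n ρ} →
        {t : TITO n // t.Avoids312 ∧ t.IsReal},
      Function.Bijective φ ∧
      ∀ x y : {ρ : ZMod n → Set (ZMod n) // IsOrnamentation n ρ},
        (∀ i : ZMod n, x.val i ⊆ y.val i) ↔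
          (φ x).val.Inversions ⊆ (φ y).val.Inversions := by
  classical
  have hord : ∀ (x y : {ρ : ZMod n → Set (ZMod n) // IsOrnamentation n ρ}),
      (∀ i : ZMod n, x.val i ⊆ y.val i) ↔
        (Stmt18Aux.tito (Stmt18Aux.dOf x.val) (Stmt18Aux.Fcond_dOf hn x.prop)).Inversions ⊆
          (Stmt18Aux.tito (Stmt18Aux.dOf y.val) (Stmt18Aux.Fcond_dOf hn y.prop)).Inversions := by
    intro x y
    rw [Stmt18Aux.inv_subset_iff hn]
    exact Stmt18Aux.rho_subset_iff hn x.prop y.prop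
  refine ⟨fun ρs => ⟨Stmt18Aux.tito (Stmt18Aux.dOf ρs.val) (Stmt18Aux.Fcond_dOf hn ρs.prop),
    Stmt18Aux.avoids312_tito _ _, Stmt18Aux.isreal_tito hn _ _ (Stmt18Aux.Scond_dOf _)⟩,
    ⟨?_, ?_⟩, hord⟩
  · intro x y hxy
    have hv := congrArg Subtype.val hxy
    simp only at hv
    have h1 := (hord x y).mpr (Eq.subset (congrArg TITO.Inversions hv))
    have h2 := (hord y x).mpr (Eq.subset (congrArg TITO.Inversions hv).symm)
    exact Subtype.ext (funext fun i => subset_antisymm (h1 i) (h2 i))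
  · rintro ⟨t, h312, hreal⟩
    have hF := Stmt18Aux.Fcond_dT hn h312
    have hS := Stmt18Aux.Scond_dT hn h312 hreal
    refine ⟨⟨Stmt18Aux.ρFromD (Stmt18Aux.dT t),
      Stmt18Aux.rhoFromD_ornamentation hn hF⟩, ?_⟩
    apply Subtype.ext
    apply Stmt18Aux.tito_ext
    intro a b
    show Stmt18Aux.trel (Stmt18Aux.dOf (Stmt18Aux.ρFromD (Stmt18Aux.dT t))) a b ↔ t.rel a b
    rw [Stmt18Aux.dOf_rhoFromD hn hF hS]
    exact Stmt18Aux.trel_dT_iff hn h312 a b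
end

section
/- In the poset of 312-avoiding TITOs under the Dyer order, every chain has at most C(n+1, 2) + 1 elements (where C(n+1,2) = n(n+1)/2), and there exists a chain with exactly C(n+1, 2) + 1 elements. Equivalently, the maximum length of a maximal chain in the cyclic Tamari lattice is C(n+1, 2). -/
namespace TITO
variable {n : ℕ}

/-- helper: extensionality via rel -/
lemma ext_rel {s t : TITO n} (h : s.rel = t.rel) : s = t := by
  cases s; cases t; simp_all

lemma rel_of_not_rel (t : TITO n) {a b : ℤ} (hne : a ≠ b) (h : ¬ t.rel a b) : t.rel b a := by
  rcases t.total a b with h' | h'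
  · exact absurd h' h
  · exact h'

lemma not_rel_of_rel (t : TITO n) {a b : ℤ} (hne : a ≠ b) (h : t.rel a b) : ¬ t.rel b a :=
  fun h' => hne (t.antisymm a b h h')

/-- L1 : downward closure of inversions for 312-avoiding TITOs -/
lemma relDown (t : TITO n) (ht : t.Avoids312) {a b c : ℤ} (hab : a < b) (hbc : b ≤ c)
    (h : t.rel c a) : t.rel b a := by
  rcases eq_or_lt_of_le hbc with rfl | hbc'
  · exact h
  · rcases t.total a b with h' | h'
    · exact absurd ⟨a, b, c, hab, hbc', h, h'⟩ ht
    · exact h'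

lemma rel_add_mul (t : TITO n) (k : ℤ) (a b : ℤ) :
    t.rel (a + k * n) (b + k * n) ↔ t.rel a b := by
  induction k using Int.induction_on with
  | zero => simp
  | succ i ih =>
      have e1 : a + ((i:ℤ) + 1) * n = (a + i * n) + n := by ring
      have e2 : b + ((i:ℤ) + 1) * n = (b + i * n) + n := by ring
      rw [e1, e2, ← t.invariant, ih]
  | pred i ih =>
      have e1 : a + (-(i:ℤ)) * n = (a + (-(i:ℤ) - 1) * n) + n := by ring
      have e2 : b + (-(i:ℤ)) * n = (b + (-(i:ℤ) - 1) * n) + n := by ring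
      rw [e1, e2, ← t.invariant] at ih
      exact ih

/-- shift both arguments from `a + _` to `a % n + _`. -/
lemma rel_emod (t : TITO n) (a c d : ℤ) :
    t.rel (a % n + c) (a % n + d) ↔ t.rel (a + c) (a + d) := by
  have h := t.rel_add_mul (a / n) (a % n + c) (a % n + d)
  have e : a % n + n * (a / n) = a := Int.emod_add_mul_ediv a n
  have e1 : a % n + c + a / n * n = a + c := by linarith
  have e2 : a % n + d + a / n * n = a + d := by linarith
  rw [e1, e2] at h
  exact h.symm

/-- L2 : if `a + n ≼ a` then everything above `a` is `≼ a`. -/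
lemma inf_all (t : TITO n) (ht : t.Avoids312) (hn : 1 ≤ n) {a : ℤ}
    (h : t.rel (a + n) a) : ∀ b, a < b → t.rel b a := by
  have key : ∀ k : ℕ, ∀ b : ℤ, a < b → b ≤ a + (k + 1) * n → t.rel b a := by
    intro k
    induction k with
    | zero =>
        intro b hab hb
        have hb' : b ≤ a + n := by push_cast at hb ⊢; linarith
        exact t.relDown ht hab hb' h
    | succ k ih =>
        intro b hab hb
        by_cases hble : b ≤ a + (k + 1) * n
        · exact ih b hab hble
        · push_neg at hble
          have h1 : a < b - n := by
            have : (1:ℤ) ≤ n := by exact_mod_cast hn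
            nlinarith
          have h2 : b - n ≤ a + (k + 1) * n := by push_cast at hb ⊢; linarith
          have h3 := ih (b - n) h1 h2
          have h4 : t.rel (b - n + n) (a + n) := (t.invariant (b - n) a).mp h3
          have h5 : t.rel b (a + n) := by
            have e : b - n + n = b := by ring
            rwa [e] at h4
          exact t.trans _ _ _ h5 h
  intro b hab
  have hn' : (1:ℤ) ≤ n := by exact_mod_cast hn
  refine key (b - a).toNat b hab ?_
  have : ((b - a).toNat : ℤ) = b - a := Int.toNat_of_nonneg (by linarith)
  nlinarith [this]

/-- L2' : if `a ≺ a + n` (finite class) then inversions at `a` reach less than `a + n`. -/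
lemma fin_bound (t : TITO n) (ht : t.Avoids312) (hn : 1 ≤ n) {a b : ℤ}
    (hfin : t.rel a (a + n)) (hab : a < b) (hrel : t.rel b a) : b < a + n := by
  have hn' : (1:ℤ) ≤ n := by exact_mod_cast hn
  by_contra hcon
  push_neg at hcon
  have h1 : t.rel (a + n) a := t.relDown ht (by linarith) hcon hrel
  have := t.antisymm _ _ hfin h1
  omega

/-- L5 : infinite propagates down along inversions. -/
lemma inf_down (t : TITO n) (ht : t.Avoids312) (hn : 1 ≤ n) {a b : ℤ}
    (hinf : t.rel (b + n) b) (hab : a < b) (hrel : t.rel b a) : t.rel (a + n) a := by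
  have hn' : (1:ℤ) ≤ n := by exact_mod_cast hn
  by_cases hc : a + n ≤ b
  · exact t.relDown ht (by linarith) hc hrel
  · push_neg at hc
    have h1 : t.rel (a + n) b := t.inf_all ht hn hinf _ hc
    exact t.trans _ _ _ h1 hrel

end TITO

namespace TITO
variable {n : ℕ}

open Classical in
/-- residues `q ∈ [0,n)` with an inversion of gap `w`. -/
noncomputable def Aset (t : TITO n) (w : ℕ) : Finset ℤ :=
  (Finset.Ico (0:ℤ) (n:ℤ)).filter (fun q => t.rel (q + w) q)

open Classical in
lemma mem_Aset {t : TITO n} {w : ℕ} {q : ℤ} :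
    q ∈ Aset t w ↔ (0 ≤ q ∧ q < n) ∧ t.rel (q + w) q := by
  simp [Aset, Finset.mem_filter, Finset.mem_Ico]

lemma card_Ico_n : (Finset.Ico (0:ℤ) (n:ℤ)).card = n := by
  rw [Int.card_Ico]; omega

lemma Aset_subset_Ico (t : TITO n) (w : ℕ) : Aset t w ⊆ Finset.Ico (0:ℤ) (n:ℤ) := by
  classical
  intro q hq
  rw [mem_Aset] at hq
  simp [Finset.mem_Ico]
  exact ⟨hq.1.1, hq.1.2⟩

lemma fin_iff_not_inf (t : TITO n) (hn : 1 ≤ n) (x : ℤ) :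
    t.rel x (x + n) ↔ ¬ t.rel (x + n) x := by
  have hne : x ≠ x + n := by omega
  constructor
  · intro h h'
    exact hne (t.antisymm _ _ h h')
  · intro h
    exact t.rel_of_not_rel (fun e => hne e.symm) h

/-- injectivity of `i ↦ (z + i) % n` on small ranges -/
lemma emod_inj (hn : 1 ≤ n) (z : ℤ) {i j : ℕ} (hi : i < n) (hj : j < n)
    (h : (z + i) % (n:ℤ) = (z + j) % (n:ℤ)) : i = j := by
  have h0 : ((z + i) - (z + j)) % (n:ℤ) = 0 := by
    rw [Int.emod_eq_emod_iff_emod_sub_eq_zero] at h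
    exact h
  have h1 : ((i:ℤ) - j) % (n:ℤ) = 0 := by
    have e : (z + i) - (z + j) = (i:ℤ) - j := by ring
    rwa [e] at h0
  have h2 : (n:ℤ) ∣ ((i:ℤ) - j) := Int.dvd_of_emod_eq_zero h1
  obtain ⟨c, hc⟩ := h2
  have hi' : (i:ℤ) < n := by exact_mod_cast hi
  have hj' : (j:ℤ) < n := by exact_mod_cast hj
  have hi0 : (0:ℤ) ≤ i := Int.natCast_nonneg i
  have hj0 : (0:ℤ) ≤ j := Int.natCast_nonneg j
  have hcz : c = 0 := by
    rcases lt_trichotomy c 0 with hc0 | hc0 | hc0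
    · have h3 : (n:ℤ) * c ≤ (n:ℤ) * (-1) := mul_le_mul_of_nonneg_left (by omega) (by positivity)
      rw [mul_neg_one] at h3
      linarith
    · exact hc0
    · have h3 : (n:ℤ) * 1 ≤ (n:ℤ) * c := mul_le_mul_of_nonneg_left (by omega) (by positivity)
      rw [mul_one] at h3
      linarith
  rw [hcz, mul_zero] at hc
  omega

/-- KEY: if a finite residue has an inversion of gap `w ≥ 1`, then
at most `n - w` residues have an inversion of gap `w`. -/
lemma key_card (t : TITO n) (ht : t.Avoids312) (hn : 1 ≤ n) {w : ℕ} (hw : 1 ≤ w) {q0 : ℤ}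
    (hfin : t.rel q0 (q0 + n)) (hrel : t.rel (q0 + w) q0) : (Aset t w).card ≤ n - w := by
  classical
  have hn' : (1:ℤ) ≤ n := by exact_mod_cast hn
  -- the maximal inversion gap at q0
  have hwb : q0 + w < q0 + n := t.fin_bound ht hn hfin (by omega : q0 < q0 + w) hrel
  have hwn : w ≤ n - 1 := by omega
  set D : Finset ℕ := (Finset.Icc 1 (n-1)).filter (fun j : ℕ => t.rel (q0 + j) q0) with hD
  have hwD : w ∈ D := by
    rw [hD, Finset.mem_filter, Finset.mem_Icc]
    exact ⟨⟨hw, hwn⟩, hrel⟩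
  have hDne : D.Nonempty := ⟨w, hwD⟩
  set m := D.max' hDne with hm
  have hmD : m ∈ D := D.max'_mem hDne
  rw [hD, Finset.mem_filter, Finset.mem_Icc] at hmD
  obtain ⟨⟨hm1, hmn⟩, hmrel⟩ := hmD
  have hwm : w ≤ m := D.le_max' w hwD
  have hmax : ∀ i : ℕ, 1 ≤ i → t.rel (q0 + i) q0 → i ≤ m := by
    intro i hi hirel
    have hib : q0 + i < q0 + n := t.fin_bound ht hn hfin (by omega : q0 < q0 + i) hirel
    have : i ∈ D := by
      rw [hD, Finset.mem_filter, Finset.mem_Icc]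
      exact ⟨⟨hi, by omega⟩, hirel⟩
    exact D.le_max' i this
  -- excluded residues
  set B : Finset ℤ := (Finset.Icc 1 w).image (fun i : ℕ => (q0 + ((m - w + i : ℕ):ℤ)) % (n:ℤ)) with hB
  have hBcard : B.card = w := by
    rw [hB, Finset.card_image_of_injOn, Nat.card_Icc]
    · omega
    · intro i hi j hj hij
      rw [Finset.mem_coe, Finset.mem_Icc] at hi hj
      have := emod_inj hn q0 (show m - w + i < n by omega) (show m - w + j < n by omega) hij
      omega
  have hBsub : B ⊆ Finset.Ico (0:ℤ) (n:ℤ) := by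
    intro x hx
    rw [hB, Finset.mem_image] at hx
    obtain ⟨i, _, rfl⟩ := hx
    rw [Finset.mem_Ico]
    exact ⟨Int.emod_nonneg _ (by omega), Int.emod_lt_of_pos _ (by omega)⟩
  have hdisj : ∀ x ∈ B, x ∉ Aset t w := by
    intro x hx hxA
    rw [hB, Finset.mem_image] at hx
    obtain ⟨i, hi, rfl⟩ := hx
    rw [Finset.mem_Icc] at hi
    rw [mem_Aset] at hxA
    set o : ℕ := m - w + i with ho
    have hrel2 : t.rel ((q0 + (o:ℤ)) + w) (q0 + (o:ℤ)) := by
      have h := t.rel_emod (q0 + (o:ℤ)) w 0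
      rw [add_zero, add_zero] at h
      exact h.mp hxA.2
    have hrel3 : t.rel (q0 + (o:ℤ)) q0 :=
      t.relDown ht (by omega : q0 < q0 + (o:ℤ)) (by omega : q0 + (o:ℤ) ≤ q0 + (m:ℤ)) hmrel
    have hrel4 : t.rel (q0 + ((o + w : ℕ):ℤ)) q0 := by
      have := t.trans _ _ _ hrel2 hrel3
      have e : (q0 + (o:ℤ)) + w = q0 + ((o + w : ℕ):ℤ) := by push_cast; ring
      rwa [e] at this
    have := hmax (o + w) (by omega) hrel4
    omega
  have hsub2 : Aset t w ⊆ (Finset.Ico (0:ℤ) (n:ℤ)) \ B := by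
    intro x hx
    rw [Finset.mem_sdiff]
    exact ⟨Aset_subset_Ico t w hx, fun hxB => hdisj x hxB hx⟩
  calc (Aset t w).card ≤ ((Finset.Ico (0:ℤ) (n:ℤ)) \ B).card := Finset.card_le_card hsub2
    _ = n - w := by rw [Finset.card_sdiff_of_subset hBsub, hBcard, card_Ico_n]

noncomputable def rank (t : TITO n) : ℕ :=
  ∑ w ∈ Finset.Icc 1 n, min (Aset t w).card (n - w + 1)

lemma sum_caps : ∀ n : ℕ, ∑ w ∈ Finset.Icc 1 n, (n - w + 1) = Nat.choose (n+1) 2 := by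
  intro n
  induction n with
  | zero => simp
  | succ n ih =>
      rw [Finset.sum_Icc_succ_top (by omega : 1 ≤ n + 1)]
      have e1 : ∑ w ∈ Finset.Icc 1 n, (n + 1 - w + 1) = ∑ w ∈ Finset.Icc 1 n, ((n - w + 1) + 1) := by
        apply Finset.sum_congr rfl
        intro w hw
        rw [Finset.mem_Icc] at hw
        omega
      rw [e1, Finset.sum_add_distrib, ih, Finset.sum_const, Nat.card_Icc]
      have e2 : Nat.choose (n+1+1) 2 = Nat.choose (n+1) 1 + Nat.choose (n+1) 2 := by
        exact Nat.choose_succ_succ (n+1) 1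
      rw [Nat.choose_one_right] at e2
      simp only [smul_eq_mul, mul_one]
      omega

lemma rank_le (t : TITO n) : rank t ≤ Nat.choose (n+1) 2 := by
  calc rank t ≤ ∑ w ∈ Finset.Icc 1 n, (n - w + 1) :=
        Finset.sum_le_sum (fun w _ => min_le_right _ _)
    _ = Nat.choose (n+1) 2 := sum_caps n

lemma rel_iff_of_inversions_eq {s t : TITO n} (h : s.Inversions = t.Inversions)
    {a b : ℤ} (hab : a < b) : (s.rel b a ↔ t.rel b a) := by
  constructor
  · intro hr
    have : ((a,b) : ℤ × ℤ) ∈ s.Inversions := ⟨hab, hr⟩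
    rw [h] at this
    exact this.2
  · intro hr
    have : ((a,b) : ℤ × ℤ) ∈ t.Inversions := ⟨hab, hr⟩
    rw [← h] at this
    exact this.2

lemma eq_of_inversions_eq {s t : TITO n} (h : s.Inversions = t.Inversions) : s = t := by
  apply ext_rel
  funext a b
  apply propext
  rcases lt_trichotomy a b with hab | hab | hab
  · have h1 := rel_iff_of_inversions_eq h hab
    constructor
    · intro hr
      by_contra hr'
      have h2 : t.rel b a := t.rel_of_not_rel (by omega) hr'
      have h3 : s.rel b a := h1.mpr h2
      have : a = b := s.antisymm _ _ hr h3
      omega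
    · intro hr
      by_contra hr'
      have h2 : s.rel b a := s.rel_of_not_rel (by omega) hr'
      have h3 : t.rel b a := h1.mp h2
      have : b = a := t.antisymm _ _ h3 hr
      omega
  · subst hab
    exact ⟨fun _ => t.refl a, fun _ => s.refl a⟩
  · have h1 := rel_iff_of_inversions_eq h hab
    constructor
    · intro hr
      exact h1.mp hr
    · intro hr
      exact h1.mpr hr

lemma Aset_mono {s t : TITO n} (h : s.Inversions ⊆ t.Inversions) {w : ℕ} (hw : 1 ≤ w) :
    Aset s w ⊆ Aset t w := by
  intro q hq
  rw [mem_Aset] at hq ⊢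
  refine ⟨hq.1, ?_⟩
  have : ((q, q + (w:ℤ)) : ℤ × ℤ) ∈ s.Inversions := ⟨by omega, hq.2⟩
  exact (h this).2

lemma rank_lt_rank (hn : 2 ≤ n) {s t : TITO n} (hs : s.Avoids312) (ht : t.Avoids312)
    (hsub : s.Inversions ⊆ t.Inversions) (hne : s ≠ t) : rank s < rank t := by
  classical
  have hn1 : 1 ≤ n := by omega
  have hnz : (0:ℤ) < n := by exact_mod_cast (by omega : 0 < n)
  -- extract a differing inversion
  have hex : ∃ p ∈ t.Inversions, p ∉ s.Inversions := by
    by_contra hcon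
    push_neg at hcon
    exact hne (eq_of_inversions_eq (Set.Subset.antisymm hsub hcon))
  obtain ⟨⟨a, b⟩, ⟨hab, hrelt⟩, hnots⟩ := hex
  have hnsrel : ¬ s.rel b a := fun h => hnots ⟨hab, h⟩
  set q : ℤ := a % n with hq
  set δ : ℤ := b - a with hδ
  have hδ1 : 1 ≤ δ := by omega
  have hq0 : 0 ≤ q := Int.emod_nonneg a (by omega)
  have hqn : q < n := Int.emod_lt_of_pos a hnz
  have htq : t.rel (q + δ) q := by
    have h := t.rel_emod a δ 0
    rw [add_zero, add_zero] at h
    apply h.mpr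
    have e : a + δ = b := by omega
    rwa [e]
  have hsq : ¬ s.rel (q + δ) q := by
    intro hcon
    have h := s.rel_emod a δ 0
    rw [add_zero, add_zero] at h
    have := h.mp hcon
    have e : a + δ = b := by omega
    rw [e] at this
    exact hnsrel this
  -- the general sum comparison
  have hterms : ∀ w ∈ Finset.Icc 1 n,
      min (Aset s w).card (n - w + 1) ≤ min (Aset t w).card (n - w + 1) := by
    intro w hw
    rw [Finset.mem_Icc] at hw
    exact min_le_min (Finset.card_le_card (Aset_mono hsub hw.1)) le_rfl
  by_cases htfin : t.rel q (q + n)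
  · -- case A : q is t-finite
    have hδn : δ < n := by
      have := t.fin_bound ht hn1 htfin (by omega : q < q + δ) htq
      omega
    set w : ℕ := δ.toNat with hw
    have hwc : (w:ℤ) = δ := Int.toNat_of_nonneg (by omega)
    have hw1 : 1 ≤ w := by omega
    have hwn : w ≤ n - 1 := by omega
    have hqt : q ∈ Aset t w := mem_Aset.mpr ⟨⟨hq0, hqn⟩, by rwa [hwc]⟩
    have hqs : q ∉ Aset s w := by
      rw [mem_Aset]
      rintro ⟨-, h⟩
      rw [hwc] at h
      exact hsq h
    have hcard : (Aset s w).card < (Aset t w).card := by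
      apply Finset.card_lt_card
      rw [Finset.ssubset_iff_of_subset (Aset_mono hsub hw1)]
      exact ⟨q, hqt, hqs⟩
    have hkey : (Aset t w).card ≤ n - w := by
      apply t.key_card ht hn1 hw1 htfin
      rwa [hwc]
    apply Finset.sum_lt_sum hterms
    refine ⟨w, Finset.mem_Icc.mpr ⟨hw1, by omega⟩, ?_⟩
    omega
  · -- case B : q is t-infinite
    have htinf : t.rel (q + n) q := by
      rcases t.total q (q + n) with h | h
      · exact absurd h htfin
      · exact h
    have hsfin : s.rel q (q + n) := by
      by_contra hcon
      have hsinf : s.rel (q + n) q := by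
        rcases s.total q (q + n) with h | h
        · exact absurd h hcon
        · exact h
      exact hsq (s.inf_all hs hn1 hsinf _ (by omega))
    set k : ℕ := (Aset s n).card with hk
    have hqnotin : q ∉ Aset s n := by
      rw [mem_Aset]
      rintro ⟨-, h⟩
      have := s.antisymm _ _ hsfin h
      omega
    have hkn : k < n := by
      have : Aset s n ⊂ Finset.Ico (0:ℤ) (n:ℤ) := by
        rw [Finset.ssubset_iff_of_subset (Aset_subset_Ico s n)]
        exact ⟨q, Finset.mem_Ico.mpr ⟨hq0, hqn⟩, hqnotin⟩
      have := Finset.card_lt_card this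
      rwa [card_Ico_n] at this
    set w' : ℕ := n - k with hw'
    have hw'1 : 1 ≤ w' := by omega
    have hw'n : w' ≤ n := by omega
    -- claim 1 : Aset s w' = Aset s n
    have claim1 : Aset s w' = Aset s n := by
      by_cases hk0 : k = 0
      · have e : w' = n := by omega
        rw [e]
      · apply Finset.Subset.antisymm
        · -- any w'-inverted residue is infinite
          intro q' hq'
          rw [mem_Aset] at hq' ⊢
          refine ⟨hq'.1, ?_⟩
          by_contra hcon
          have hq'fin : s.rel q' (q' + n) := by
            rcases s.total q' (q' + n) with h | h
            · exact h
            · exact absurd h hcon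
          -- build w'+1 distinct finite residues
          set E : Finset ℤ := (Finset.range (w'+1)).image (fun i : ℕ => (q' + i) % (n:ℤ)) with hE
          have hEcard : E.card = w' + 1 := by
            rw [hE, Finset.card_image_of_injOn, Finset.card_range]
            intro i hi j hj hij
            rw [Finset.mem_coe, Finset.mem_range] at hi hj
            exact emod_inj hn1 q' (by omega) (by omega) hij
          have hEsub : E ⊆ (Finset.Ico (0:ℤ) (n:ℤ)) \ Aset s n := by
            intro x hx
            rw [hE, Finset.mem_image] at hx
            obtain ⟨i, hi, rfl⟩ := hx
            rw [Finset.mem_range] at hi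
            have hfin_i : s.rel (q' + i) (q' + i + n) := by
              rcases Nat.eq_zero_or_pos i with h0 | hpos
              · subst h0; simpa using hq'fin
              · have hrel_i : s.rel (q' + i) q' :=
                  s.relDown hs (by omega : q' < q' + (i:ℤ))
                    (by exact_mod_cast (by omega : q' + (i:ℤ) ≤ q' + (w':ℤ))) hq'.2
                by_contra hcon2
                have hinf_i : s.rel (q' + i + n) (q' + i) := by
                  rcases s.total (q' + i) (q' + i + n) with h | h
                  · exact absurd h hcon2
                  · exact h
                have := s.inf_down hs hn1 hinf_i (by omega : q' < q' + (i:ℤ)) hrel_i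
                exact hcon (by
                  have := s.inf_all hs hn1 this (q' + n) (by omega)
                  exact this)
            rw [Finset.mem_sdiff, Finset.mem_Ico]
            constructor
            · exact ⟨Int.emod_nonneg _ (by omega), Int.emod_lt_of_pos _ hnz⟩
            · rw [mem_Aset]
              rintro ⟨-, hbad⟩
              have h := s.rel_emod (q' + i) 0 (n:ℤ)
              rw [add_zero, add_zero] at h
              have hfin' : s.rel ((q' + i) % n) ((q' + i) % n + n) := h.mpr hfin_i
              have := s.antisymm _ _ hfin' hbad
              omega
          have hcount : E.card ≤ ((Finset.Ico (0:ℤ) (n:ℤ)) \ Aset s n).card :=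
            Finset.card_le_card hEsub
          rw [hEcard, Finset.card_sdiff_of_subset (Aset_subset_Ico s n), card_Ico_n] at hcount
          omega
        · -- infinite residues have w'-inversions
          intro q' hq'
          rw [mem_Aset] at hq' ⊢
          exact ⟨hq'.1, s.inf_all hs hn1 hq'.2 _ (by omega)⟩
    -- strict inequality at w'
    apply Finset.sum_lt_sum hterms
    refine ⟨w', Finset.mem_Icc.mpr ⟨hw'1, hw'n⟩, ?_⟩
    have hscard : (Aset s w').card = k := by rw [claim1]
    have hqtin : q ∈ Aset t w' := by
      rw [mem_Aset]
      exact ⟨⟨hq0, hqn⟩, t.inf_all ht hn1 htinf _ (by omega)⟩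
    have hqsnotin : q ∉ Aset s w' := by rw [claim1]; exact hqnotin
    have htcard : k + 1 ≤ (Aset t w').card := by
      have hins : insert q (Aset s w') ⊆ Aset t w' := by
        rw [Finset.insert_subset_iff]
        exact ⟨hqtin, Aset_mono hsub hw'1⟩
      have := Finset.card_le_card hins
      rwa [Finset.card_insert_of_notMem hqsnotin, hscard] at this
    omega

lemma part1 (hn : 2 ≤ n) (C : Set (TITO n)) (hsubP : ∀ t ∈ C, t.Avoids312)
    (hch : ∀ x ∈ C, ∀ y ∈ C, x.Inversions ⊆ y.Inversions ∨ y.Inversions ⊆ x.Inversions) :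
    C.Finite ∧ C.ncard ≤ Nat.choose (n+1) 2 + 1 := by
  have hinj : Set.InjOn rank C := by
    intro x hx y hy hxy
    by_contra hne
    rcases hch x hx y hy with h | h
    · have := rank_lt_rank hn (hsubP x hx) (hsubP y hy) h hne
      omega
    · have := rank_lt_rank hn (hsubP y hy) (hsubP x hx) h (Ne.symm hne)
      omega
  have himg : rank '' C ⊆ Set.Iic (Nat.choose (n+1) 2) := by
    rintro r ⟨x, _, rfl⟩
    exact rank_le x
  have hfinimg : (rank '' C).Finite := (Set.finite_Iic _).subset himg
  have hfin : C.Finite := Set.Finite.of_finite_image hfinimg hinj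
  refine ⟨hfin, ?_⟩
  calc C.ncard = (rank '' C).ncard := (Set.ncard_image_of_injOn hinj).symm
    _ ≤ (Set.Iic (Nat.choose (n+1) 2)).ncard := Set.ncard_le_ncard himg (Set.finite_Iic _)
    _ = Nat.choose (n+1) 2 + 1 := by rw [← Finset.coe_Iic, Set.ncard_coe_finset, Nat.card_Iic]

end TITO

namespace TITO
variable {n : ℕ}

def cval (n p : ℕ) (x : ℤ) : ℤ := if x % (n:ℤ) < (p:ℤ) then 1 else 0

def phiv (n p j : ℕ) (x : ℤ) : ℤ :=
  if x % (n:ℤ) < (p:ℤ) then -x else if x % (n:ℤ) = (p:ℤ) then x + (j:ℤ) else x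

def lrel (n p j : ℕ) (x y : ℤ) : Prop :=
  cval n p x < cval n p y ∨
    (cval n p x = cval n p y ∧
      (phiv n p j x < phiv n p j y ∨ (phiv n p j x = phiv n p j y ∧ y ≤ x)))

lemma emod_add_n (n : ℕ) (x : ℤ) : (x + (n:ℤ)) % (n:ℤ) = x % (n:ℤ) := by
  have e : x + (n:ℤ) = x + (n:ℤ) * 1 := by ring
  rw [e, Int.add_mul_emod_self_left]

lemma cval_period (n p : ℕ) (x : ℤ) : cval n p (x + n) = cval n p x := by
  unfold cval
  rw [emod_add_n]

lemma cval01 (n p : ℕ) (x : ℤ) : cval n p x = 0 ∨ cval n p x = 1 := by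
  unfold cval
  split_ifs <;> simp

lemma phiv_shift (n p j : ℕ) (x : ℤ) :
    (cval n p x = 1 ∧ phiv n p j (x + n) = phiv n p j x - n) ∨
    (cval n p x = 0 ∧ phiv n p j (x + n) = phiv n p j x + n) := by
  unfold cval phiv
  rw [emod_add_n]
  split_ifs with h1 h2
  · exact Or.inl ⟨rfl, by ring⟩
  · exact Or.inr ⟨rfl, by ring⟩
  · exact Or.inr ⟨rfl, rfl⟩

lemma phiv_ge (n p j : ℕ) {x : ℤ} (h : cval n p x = 0) : x ≤ phiv n p j x := by
  unfold cval at h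
  unfold phiv
  split_ifs with h1 h2
  · rw [if_pos h1] at h
    omega
  · rw [if_neg h1] at h
    omega
  · omega

def Tcal (n p j : ℕ) : TITO n where
  rel := lrel n p j
  refl a := Or.inr ⟨rfl, Or.inr ⟨rfl, le_refl a⟩⟩
  antisymm a b h1 h2 := by
    unfold lrel at h1 h2
    omega
  trans a b c h1 h2 := by
    unfold lrel at h1 h2 ⊢
    omega
  total a b := by
    unfold lrel
    omega
  invariant a b := by
    show lrel n p j a b ↔ lrel n p j (a + n) (b + n)
    unfold lrel
    have ha := phiv_shift n p j a
    have hb := phiv_shift n p j b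
    rw [cval_period n p a, cval_period n p b]
    omega

/-- validity of parameters -/
def PValid (n p j : ℕ) : Prop := (p < n ∧ p + j + 1 ≤ n) ∨ (p = n ∧ j = 0)

lemma Tcal_rel_iff (hn : 1 ≤ n) {p j : ℕ} (hv : PValid n p j) {a b : ℤ} (hab : a < b) :
    (Tcal n p j).rel b a ↔ (a % (n:ℤ) < (p:ℤ) ∨ (a % (n:ℤ) = (p:ℤ) ∧ b ≤ a + (j:ℤ))) := by
  have hnz : (0:ℤ) < n := by exact_mod_cast hn
  have hra0 : 0 ≤ a % (n:ℤ) := Int.emod_nonneg a (by omega)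
  have hran : a % (n:ℤ) < (n:ℤ) := Int.emod_lt_of_pos a hnz
  have hrb0 : 0 ≤ b % (n:ℤ) := Int.emod_nonneg b (by omega)
  have hrbn : b % (n:ℤ) < (n:ℤ) := Int.emod_lt_of_pos b hnz
  show lrel n p j b a ↔ _
  by_cases hra : a % (n:ℤ) < (p:ℤ)
  · have hca : cval n p a = 1 := if_pos hra
    by_cases hrb : b % (n:ℤ) < (p:ℤ)
    · have hcb : cval n p b = 1 := if_pos hrb
      have hpa : phiv n p j a = -a := if_pos hra
      have hpb : phiv n p j b = -b := if_pos hrb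
      unfold lrel
      rw [hca, hcb, hpa, hpb]
      omega
    · have hcb : cval n p b = 0 := if_neg hrb
      unfold lrel
      rw [hca, hcb]
      omega
  · by_cases hrap : a % (n:ℤ) = (p:ℤ)
    · -- a in the twisted class
      have hpn : p < n := by
        rcases hv with ⟨h, _⟩ | ⟨h, _⟩
        · exact h
        · subst h; omega
      have hj : p + j + 1 ≤ n := by
        rcases hv with ⟨_, h⟩ | ⟨h, _⟩
        · exact h
        · omega
      have hjz : (p:ℤ) + (j:ℤ) + 1 ≤ (n:ℤ) := by exact_mod_cast hj
      have hca : cval n p a = 0 := if_neg hra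
      have hpa : phiv n p j a = a + j := by
        unfold phiv
        rw [if_neg hra, if_pos hrap]
      constructor
      · intro h
        right
        refine ⟨hrap, ?_⟩
        rcases h with h | ⟨hc, h2⟩
        · rw [hca] at h
          rcases cval01 n p b with h' | h' <;> omega
        · rw [hca] at hc
          have hpbge : b ≤ phiv n p j b := phiv_ge n p j hc
          rcases h2 with h2 | ⟨h2, -⟩ <;> rw [hpa] at h2 <;> omega
      · rintro (h | ⟨-, hble⟩)
        · omega
        · have hδ : b % (n:ℤ) = (p:ℤ) + (b - a) := by
            conv_lhs => rw [show b = a + (b - a) from by ring]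
            rw [← Int.emod_add_emod, hrap, Int.emod_eq_of_lt (by omega) (by omega)]
          have hrbp : ¬ (b % (n:ℤ) < (p:ℤ)) := by omega
          have hrbnep : b % (n:ℤ) ≠ (p:ℤ) := by omega
          have hcb : cval n p b = 0 := if_neg hrbp
          have hpb : phiv n p j b = b := by
            unfold phiv
            rw [if_neg hrbp, if_neg hrbnep]
          unfold lrel
          rw [hca, hcb, hpa, hpb]
          omega
    · -- a in a plain class : no inversions at a
      have hca : cval n p a = 0 := if_neg hra
      have hpa : phiv n p j a = a := by
        unfold phiv
        rw [if_neg hra, if_neg hrap]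
      constructor
      · intro h
        exfalso
        rcases h with h | ⟨hc, h2⟩
        · rw [hca] at h
          rcases cval01 n p b with h' | h' <;> omega
        · rw [hca] at hc
          have hpbge : b ≤ phiv n p j b := phiv_ge n p j hc
          rcases h2 with h2 | ⟨h2, -⟩ <;> rw [hpa] at h2 <;> omega
      · rintro (h | ⟨h, -⟩)
        · exact absurd h hra
        · exact absurd h hrap

lemma Tcal_avoids (hn : 1 ≤ n) {p j : ℕ} (hv : PValid n p j) : (Tcal n p j).Avoids312 := by
  rintro ⟨a, b, c, hab, hbc, h1, h2⟩
  have hc1 := (Tcal_rel_iff hn hv (hab.trans hbc)).mp h1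
  have hcb : a % (n:ℤ) < (p:ℤ) ∨ (a % (n:ℤ) = (p:ℤ) ∧ b ≤ a + (j:ℤ)) := by omega
  have h3 : (Tcal n p j).rel b a := (Tcal_rel_iff hn hv hab).mpr hcb
  have := (Tcal n p j).antisymm _ _ h2 h3
  omega

lemma Tcal_inv_mono (hn : 1 ≤ n) {p j p' j' : ℕ} (hv : PValid n p j) (hv' : PValid n p' j')
    (hle : p < p' ∨ (p = p' ∧ j ≤ j')) :
    (Tcal n p j).Inversions ⊆ (Tcal n p' j').Inversions := by
  rintro ⟨a, b⟩ ⟨hab, hrel⟩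
  refine ⟨hab, ?_⟩
  have h := (Tcal_rel_iff hn hv hab).mp hrel
  apply (Tcal_rel_iff hn hv' hab).mpr
  omega

lemma Tcal_ne (hn : 1 ≤ n) {p j p' j' : ℕ} (hv : PValid n p j) (hv' : PValid n p' j')
    (hlt : p < p' ∨ (p = p' ∧ j < j')) : Tcal n p j ≠ Tcal n p' j' := by
  intro heq
  have hrel : ∀ a b : ℤ, (Tcal n p j).rel a b ↔ (Tcal n p' j').rel a b := by
    rw [heq]
    exact fun _ _ => Iff.rfl
  rcases hlt with hlt | ⟨rfl, hlt⟩
  · have hpn : p < n := by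
      rcases hv with ⟨h, _⟩ | ⟨h, _⟩
      · exact h
      · rcases hv' with ⟨h', _⟩ | ⟨h', _⟩ <;> omega
    have hj : p + j + 1 ≤ n := by
      rcases hv with ⟨_, h⟩ | ⟨h, _⟩
      · exact h
      · omega
    have hab : (p:ℤ) < (p:ℤ) + n := by
      have : (1:ℤ) ≤ n := by exact_mod_cast hn
      omega
    have hra : (p:ℤ) % (n:ℤ) = (p:ℤ) :=
      Int.emod_eq_of_lt (by positivity) (by exact_mod_cast hpn)
    have h1 : (Tcal n p' j').rel ((p:ℤ) + n) (p:ℤ) := by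
      apply (Tcal_rel_iff hn hv' hab).mpr
      left
      rw [hra]
      exact_mod_cast hlt
    have h3 := (Tcal_rel_iff hn hv hab).mp ((hrel _ _).mpr h1)
    rw [hra] at h3
    omega
  · have hpn : p < n := by
      rcases hv' with ⟨h, _⟩ | ⟨_, h⟩
      · exact h
      · omega
    have hj : p + j + 1 ≤ n := by
      rcases hv with ⟨_, h⟩ | ⟨h, _⟩
      · exact h
      · omega
    have hj' : p + j' + 1 ≤ n := by
      rcases hv' with ⟨_, h⟩ | ⟨h, _⟩
      · exact h
      · omega
    have hab : (p:ℤ) < (p:ℤ) + j + 1 := by omega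
    have hra : (p:ℤ) % (n:ℤ) = (p:ℤ) :=
      Int.emod_eq_of_lt (by positivity) (by exact_mod_cast hpn)
    have h1 : (Tcal n p j').rel ((p:ℤ) + j + 1) (p:ℤ) := by
      apply (Tcal_rel_iff hn hv' hab).mpr
      right
      rw [hra]
      constructor
      · rfl
      · have : (j:ℤ) + 1 ≤ (j':ℤ) := by exact_mod_cast hlt
        omega
    have h3 := (Tcal_rel_iff hn hv hab).mp ((hrel _ _).mpr h1)
    rw [hra] at h3
    omega

end TITO

namespace TITO

def Idx (n : ℕ) : Finset (ℕ × ℕ) :=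
  ((Finset.range n).biUnion (fun p => (Finset.range (n - p)).image (fun j => (p, j)))) ∪ {(n, 0)}

lemma mem_Idx {n : ℕ} {q : ℕ × ℕ} :
    q ∈ Idx n ↔ (q.1 < n ∧ q.2 < n - q.1) ∨ q = (n, 0) := by
  unfold Idx
  rw [Finset.mem_union, Finset.mem_singleton, Finset.mem_biUnion]
  constructor
  · rintro (⟨p, hp, hq⟩ | h)
    · rw [Finset.mem_image] at hq
      obtain ⟨j, hj, rfl⟩ := hq
      rw [Finset.mem_range] at hp hj
      exact Or.inl ⟨hp, hj⟩
    · exact Or.inr h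
  · rintro (⟨h1, h2⟩ | h)
    · left
      refine ⟨q.1, Finset.mem_range.mpr h1, ?_⟩
      rw [Finset.mem_image]
      exact ⟨q.2, Finset.mem_range.mpr h2, rfl⟩
    · exact Or.inr h

lemma valid_of_mem_Idx {n : ℕ} {q : ℕ × ℕ} (h : q ∈ Idx n) : PValid n q.1 q.2 := by
  rw [mem_Idx] at h
  unfold PValid
  rcases h with ⟨h1, h2⟩ | h
  · exact Or.inl ⟨h1, by omega⟩
  · right
    rw [h]
    exact ⟨rfl, rfl⟩

lemma sum_range_sub (n : ℕ) : ∑ p ∈ Finset.range n, (n - p) = Nat.choose (n+1) 2 := by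
  induction n with
  | zero => simp
  | succ n ih =>
      rw [Finset.sum_range_succ]
      have e1 : ∑ p ∈ Finset.range n, (n + 1 - p) = ∑ p ∈ Finset.range n, ((n - p) + 1) := by
        apply Finset.sum_congr rfl
        intro p hp
        rw [Finset.mem_range] at hp
        omega
      rw [e1, Finset.sum_add_distrib, ih, Finset.sum_const, Finset.card_range]
      have e2 : Nat.choose (n+1+1) 2 = Nat.choose (n+1) 1 + Nat.choose (n+1) 2 :=
        Nat.choose_succ_succ (n+1) 1
      rw [Nat.choose_one_right] at e2
      simp only [smul_eq_mul, mul_one]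
      omega

lemma Idx_card (n : ℕ) : (Idx n).card = Nat.choose (n+1) 2 + 1 := by
  classical
  unfold Idx
  have hdisj : Disjoint
      ((Finset.range n).biUnion (fun p => (Finset.range (n - p)).image (fun j => (p, j))))
      ({((n:ℕ), (0:ℕ))} : Finset (ℕ × ℕ)) := by
    rw [Finset.disjoint_singleton_right, Finset.mem_biUnion]
    rintro ⟨p, hp, hq⟩
    rw [Finset.mem_image] at hq
    obtain ⟨j, hj, hpj⟩ := hq
    rw [Finset.mem_range] at hp
    have : p = n := congrArg Prod.fst hpj
    omega
  rw [Finset.card_union_of_disjoint hdisj, Finset.card_singleton]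
  congr 1
  rw [Finset.card_biUnion]
  · calc ∑ p ∈ Finset.range n, ((Finset.range (n - p)).image (fun j => (p, j))).card
        = ∑ p ∈ Finset.range n, (n - p) := by
          apply Finset.sum_congr rfl
          intro p _
          rw [Finset.card_image_of_injective _ (fun a b hab => (Prod.mk.injEq _ _ _ _).mp hab |>.2),
            Finset.card_range]
      _ = Nat.choose (n+1) 2 := sum_range_sub n
  · intro p _ p' _ hne
    simp only [Function.onFun]
    rw [Finset.disjoint_left]
    intro q hq hq'
    rw [Finset.mem_image] at hq hq'
    obtain ⟨j, _, rfl⟩ := hq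
    obtain ⟨j', _, h⟩ := hq'
    exact hne ((Prod.mk.injEq _ _ _ _).mp h).1.symm

lemma part2 (hn : 2 ≤ n) :
    ∃ C : Set (TITO n), (∀ t ∈ C, t.Avoids312) ∧
      (∀ x ∈ C, ∀ y ∈ C, x.Inversions ⊆ y.Inversions ∨ y.Inversions ⊆ x.Inversions) ∧
      C.ncard = Nat.choose (n+1) 2 + 1 := by
  classical
  have hn1 : 1 ≤ n := by omega
  refine ⟨(fun q : ℕ × ℕ => Tcal n q.1 q.2) '' ↑(Idx n), ?_, ?_, ?_⟩
  · rintro t ⟨q, hq, rfl⟩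
    exact Tcal_avoids hn1 (valid_of_mem_Idx (by exact_mod_cast hq))
  · rintro x ⟨q, hq, rfl⟩ y ⟨q', hq', rfl⟩
    have hv := valid_of_mem_Idx (show q ∈ Idx n by exact_mod_cast hq)
    have hv' := valid_of_mem_Idx (show q' ∈ Idx n by exact_mod_cast hq')
    rcases Nat.lt_trichotomy q.1 q'.1 with h | h | h
    · exact Or.inl (Tcal_inv_mono hn1 hv hv' (Or.inl h))
    · rcases Nat.le_total q.2 q'.2 with h2 | h2
      · exact Or.inl (Tcal_inv_mono hn1 hv hv' (Or.inr ⟨h, h2⟩))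
      · exact Or.inr (Tcal_inv_mono hn1 hv' hv (Or.inr ⟨h.symm, h2⟩))
    · exact Or.inr (Tcal_inv_mono hn1 hv' hv (Or.inl h))
  · have hinj : Set.InjOn (fun q : ℕ × ℕ => Tcal n q.1 q.2) ↑(Idx n) := by
      intro q hq q' hq' heq
      have hv := valid_of_mem_Idx (show q ∈ Idx n by exact_mod_cast hq)
      have hv' := valid_of_mem_Idx (show q' ∈ Idx n by exact_mod_cast hq')
      by_contra hne
      rcases Nat.lt_trichotomy q.1 q'.1 with h | h | h
      · exact Tcal_ne hn1 hv hv' (Or.inl h) heq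
      · rcases Nat.lt_trichotomy q.2 q'.2 with h2 | h2 | h2
        · exact Tcal_ne hn1 hv hv' (Or.inr ⟨h, h2⟩) heq
        · exact hne (Prod.ext h h2)
        · exact Tcal_ne hn1 hv' hv (Or.inr ⟨h.symm, h2⟩) heq.symm
      · exact Tcal_ne hn1 hv' hv (Or.inl h) heq.symm
    rw [Set.ncard_image_of_injOn hinj, Set.ncard_coe_finset, Idx_card]

end TITO

theorem stmt19 (n : ℕ) (hn : 2 ≤ n) :
    (∀ C : Set (TITO n), IsChainIn {t : TITO n | t.Avoids312} C →
      C.Finite ∧ C.ncard ≤ Nat.choose (n + 1) 2 + 1) ∧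
    (∃ C : Set (TITO n), IsChainIn {t : TITO n | t.Avoids312} C ∧
      C.ncard = Nat.choose (n + 1) 2 + 1) := by
  constructor
  · intro C hC
    exact TITO.part1 hn C (fun t ht => hC.1 ht) hC.2
  · obtain ⟨C, h1, h2, h3⟩ := TITO.part2 hn
    exact ⟨C, ⟨h1, h2⟩, h3⟩
end
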